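/- arXiv:1901.01509 — 3 statements merged into one kernel-verified Lean document; each statement's English description precedes it below -/
import Mathlib

section
/- Let $P_n$ be the path graph on $n \geq 2$ vertices and $S = K[x_1,\ldots,x_n]$. Then $\deg h(S/I(P_n), \lambda) = \lceil n/2 \rceil$ if $n \equiv 0, 2 \pmod 3$, and $\deg h(S/I(P_n), \lambda) = \lceil n/2 \rceil - 1$ if $n \equiv 1 \pmod 3$. -/
open MvPolynomial

/-- The edge ideal of a finite simple graph. -/
noncomputable def edgeIdeal (K : Type) [Field K] {V : Type} (G : SimpleGraph V) :
    Ideal (MvPolynomial V K) :=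
  Ideal.span {p | ∃ v w, G.Adj v w ∧ p = X v * X w}

/-- The Hilbert series of `S/I`, where `S = K[x_v : v ∈ σ]`:
the power series whose `d`-th coefficient is the `K`-dimension of the degree-`d`
graded piece of `S/I` (the image of the homogeneous polynomials of degree `d`). -/
noncomputable def hilbertSeries (K : Type) [Field K] {σ : Type} [Fintype σ]
    (I : Ideal (MvPolynomial σ K)) : PowerSeries ℚ :=
  PowerSeries.mk fun d =>
    (Module.finrank K ((MvPolynomial.homogeneousSubmodule σ K d).map
      (Ideal.Quotient.mkₐ K I).toLinearMap) : ℚ)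

namespace PathH

set_option linter.unusedSectionVars false

section PartA
open MvPolynomial Finset


variable (K : Type) [Field K] {V : Type} (G : SimpleGraph V)

/-- `m` is good if its support is an independent set of `G`. -/
def Good (G : SimpleGraph V) (m : V →₀ ℕ) : Prop :=
  ∀ v w : V, G.Adj v w → m v = 0 ∨ m w = 0

lemma edgeIdeal_eq_span_monomial :
    edgeIdeal K G = Ideal.span ((fun s => monomial s (1 : K)) ''
      {s | ∃ v w, G.Adj v w ∧ s = Finsupp.single v 1 + Finsupp.single w 1}) := by
  unfold edgeIdeal
  congr 1
  ext p
  constructor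
  · rintro ⟨v, w, h, rfl⟩
    exact ⟨Finsupp.single v 1 + Finsupp.single w 1, ⟨v, w, h, rfl⟩, by
      rw [X, X, monomial_mul, one_mul]⟩
  · rintro ⟨s, ⟨v, w, h, rfl⟩, rfl⟩
    exact ⟨v, w, h, by rw [X, X, monomial_mul, one_mul]⟩

lemma single_add_single_le {v w : V} (hvw : v ≠ w) (m : V →₀ ℕ) :
    Finsupp.single v 1 + Finsupp.single w 1 ≤ m ↔ m v ≠ 0 ∧ m w ≠ 0 := by
  rw [Finsupp.le_def]
  constructor
  · intro h
    have hv := h v; have hw := h w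
    rw [Finsupp.add_apply, Finsupp.single_eq_same, Finsupp.single_eq_of_ne' hvw.symm] at hv
    rw [Finsupp.add_apply, Finsupp.single_eq_same, Finsupp.single_eq_of_ne' hvw] at hw
    omega
  · rintro ⟨hv, hw⟩ i
    rw [Finsupp.add_apply]
    rcases eq_or_ne v i with rfl | hiv
    · rw [Finsupp.single_eq_same, Finsupp.single_eq_of_ne' hvw.symm]; omega
    rcases eq_or_ne w i with rfl | hiw
    · rw [Finsupp.single_eq_same, Finsupp.single_eq_of_ne' hiv]; omega
    · rw [Finsupp.single_eq_of_ne' hiv, Finsupp.single_eq_of_ne' hiw]; omega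

lemma mem_edgeIdeal_iff {p : MvPolynomial V K} :
    p ∈ edgeIdeal K G ↔ ∀ m ∈ p.support, ¬ Good G m := by
  rw [edgeIdeal_eq_span_monomial, mem_ideal_span_monomial_image]
  apply forall₂_congr
  intro m _
  constructor
  · rintro ⟨s, ⟨v, w, h, rfl⟩, hle⟩ hg
    rw [single_add_single_le h.ne] at hle
    rcases hg v w h with h0 | h0 <;> [exact hle.1 h0; exact hle.2 h0]
  · intro h
    rw [Good] at h
    push_neg at h
    obtain ⟨v, w, hadj, hv, hw⟩ := h
    exact ⟨_, ⟨v, w, hadj, rfl⟩, (single_add_single_le hadj.ne m).2 ⟨hv, hw⟩⟩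



variable [Fintype V] [DecidableEq V]

open Classical in
noncomputable def goodFinset (d : ℕ) : Finset (V →₀ ℕ) :=
  (Finset.univ.finsuppAntidiag d).filter (Good G)

lemma sum_univ_eq_degree (m : V →₀ ℕ) : Finset.univ.sum m = Finsupp.degree m :=
  (Finset.sum_subset (Finset.subset_univ _)
    (fun _ _ hi => Finsupp.notMem_support_iff.mp hi)).symm

lemma mem_goodFinset {d : ℕ} {m : V →₀ ℕ} :
    m ∈ goodFinset G d ↔ Finsupp.degree m = d ∧ Good G m := by
  classical
  rw [goodFinset, Finset.mem_filter, Finset.mem_finsuppAntidiag, sum_univ_eq_degree]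
  simp [Finset.subset_univ]

theorem coeff_hilbertSeries (d : ℕ) :
    PowerSeries.coeff d (hilbertSeries K (edgeIdeal K G)) = ((goodFinset G d).card : ℚ) := by
  classical
  set I := edgeIdeal K G with hI
  set B := goodFinset G d with hB
  let b : B → (MvPolynomial V K ⧸ I) := fun m => Ideal.Quotient.mkₐ K I (monomial m.1 1)
  have hgood : ∀ m : B, Finsupp.degree m.1 = d ∧ Good G m.1 := fun m =>
    (mem_goodFinset G).mp m.2
  have hli : LinearIndependent K b := by
    rw [linearIndependent_iff']
    intro s g hsum i hi
    by_contra hgi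
    have h0 : (Ideal.Quotient.mkₐ K I) (∑ j ∈ s, g j • monomial j.1 (1 : K)) = 0 := by
      rw [map_sum]
      simpa [b] using hsum
    have hmem : (∑ j ∈ s, g j • monomial j.1 (1 : K)) ∈ I := by
      rwa [Ideal.Quotient.mkₐ_eq_mk, Ideal.Quotient.eq_zero_iff_mem] at h0
    rw [hI, mem_edgeIdeal_iff] at hmem
    refine hmem i.1 ?_ (hgood i).2
    rw [mem_support_iff]
    have hc : coeff i.1 (∑ j ∈ s, g j • monomial j.1 (1 : K)) = g i := by
      rw [coeff_sum]
      rw [Finset.sum_eq_single i]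
      · simp [smul_monomial, coeff_monomial]
      · intro j hj hji
        simp only [smul_monomial, smul_eq_mul, mul_one, coeff_monomial]
        rw [if_neg (fun h => hji (Subtype.ext h))]
      · intro h; exact absurd hi h
    rw [hc]; exact hgi
  have hspan : Submodule.span K (Set.range b) =
      (homogeneousSubmodule V K d).map (Ideal.Quotient.mkₐ K I).toLinearMap := by
    apply le_antisymm
    · rw [Submodule.span_le]
      rintro _ ⟨m, rfl⟩
      exact ⟨monomial m.1 1, (mem_homogeneousSubmodule _ _).mpr
        (isHomogeneous_monomial _ (hgood m).1), rfl⟩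
    · rintro _ ⟨p, hp, rfl⟩
      have hp' : p.IsHomogeneous d := hp
      have : (Ideal.Quotient.mkₐ K I).toLinearMap p =
          ∑ m ∈ p.support, (Ideal.Quotient.mkₐ K I) (monomial m (coeff m p)) := by
        conv_lhs => rw [p.as_sum]
        exact map_sum _ _ _
      rw [this]
      apply Submodule.sum_mem
      intro m hm
      by_cases hg : Good G m
      · have hd : Finsupp.degree m = d := by
          rw [Finsupp.degree_eq_weight_one]
          exact hp' (mem_support_iff.mp hm)
        have hmB : m ∈ B := (mem_goodFinset G).mpr ⟨hd, hg⟩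
        have : monomial m (coeff m p) = coeff m p • monomial m (1 : K) := by
          rw [smul_monomial, smul_eq_mul, mul_one]
        rw [this, map_smul]
        exact Submodule.smul_mem _ _ (Submodule.subset_span ⟨⟨m, hmB⟩, rfl⟩)
      · have hmem : monomial m (coeff m p) ∈ I := by
          rw [hI, mem_edgeIdeal_iff]
          intro m' hm'
          rw [support_monomial, if_neg (mem_support_iff.mp hm)] at hm'
          rw [Finset.mem_singleton] at hm'
          subst hm'
          exact hg
        rw [Ideal.Quotient.mkₐ_eq_mk, Ideal.Quotient.eq_zero_iff_mem.mpr hmem]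
        exact Submodule.zero_mem _
  rw [hilbertSeries, PowerSeries.coeff_mk]
  rw [← hspan, finrank_span_eq_card hli, Fintype.card_coe]


end PartA
section PartB
open Finset







/-- index form of goodness for path graphs -/
def IGood (n : ℕ) (m : Fin n →₀ ℕ) : Prop :=
  ∀ (i : ℕ) (h : i + 1 < n), m ⟨i, Nat.lt_of_succ_lt h⟩ = 0 ∨ m ⟨i + 1, h⟩ = 0

lemma good_pathGraph_iff {n : ℕ} {m : Fin n →₀ ℕ} :
    Good (SimpleGraph.pathGraph n) m ↔ IGood n m := by
  constructor
  · intro hg i h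
    exact hg ⟨i, Nat.lt_of_succ_lt h⟩ ⟨i + 1, h⟩ (SimpleGraph.pathGraph_adj.mpr (Or.inl rfl))
  · intro hg v w hadj
    rcases SimpleGraph.pathGraph_adj.mp hadj with h | h
    · have := hg v.val (h ▸ w.isLt)
      rcases this with h0 | h0
      · left; convert h0 using 2
      · right; rw [← h0]; congr 1; exact (Fin.ext h.symm)
    · have := hg w.val (h ▸ v.isLt)
      rcases this with h0 | h0
      · right; convert h0 using 2
      · left; rw [← h0]; congr 1; exact (Fin.ext h.symm)

noncomputable def cnt (n d : ℕ) : ℕ := (goodFinset (SimpleGraph.pathGraph n) d).card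

/-- extend by one variable with value zero at the top -/
noncomputable def ext1 {k : ℕ} (m : Fin k →₀ ℕ) : Fin (k + 1) →₀ ℕ :=
  Finsupp.embDomain Fin.castSuccEmb m

lemma ext1_apply_castSucc {k : ℕ} (m : Fin k →₀ ℕ) (i : Fin k) :
    ext1 m i.castSucc = m i :=
  Finsupp.embDomain_apply_self _ _ _

lemma ext1_apply_last {k : ℕ} (m : Fin k →₀ ℕ) : ext1 m (Fin.last k) = 0 := by
  apply Finsupp.embDomain_notin_range
  rintro ⟨j, hj⟩
  have := congrArg Fin.val hj
  simp [Fin.castSuccEmb] at this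
  omega

lemma ext1_apply_mk {k i : ℕ} (h : i < k) (hk : i < k + 1) (m : Fin k →₀ ℕ) :
    ext1 m ⟨i, hk⟩ = m ⟨i, h⟩ := by
  have : (⟨i, hk⟩ : Fin (k + 1)) = (⟨i, h⟩ : Fin k).castSucc := rfl
  rw [this, ext1_apply_castSucc]

lemma degree_ext1 {k : ℕ} (m : Fin k →₀ ℕ) :
    Finsupp.degree (ext1 m) = Finsupp.degree m := by
  rw [← sum_univ_eq_degree, ← sum_univ_eq_degree]
  rw [Fin.sum_univ_castSucc]
  simp only [ext1_apply_last, add_zero]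
  exact Finset.sum_congr rfl fun i _ => ext1_apply_castSucc m i

/-- restrict, dropping the top variable -/
noncomputable def res1 {k : ℕ} (m : Fin (k + 1) →₀ ℕ) : Fin k →₀ ℕ :=
  Finsupp.comapDomain Fin.castSucc m ((Fin.castSucc_injective k).injOn)

lemma res1_apply {k : ℕ} (m : Fin (k + 1) →₀ ℕ) (i : Fin k) :
    res1 m i = m i.castSucc := rfl

lemma res1_ext1 {k : ℕ} (m : Fin k →₀ ℕ) : res1 (ext1 m) = m := by
  ext i; rw [res1_apply, ext1_apply_castSucc]

lemma ext1_res1 {k : ℕ} (m : Fin (k + 1) →₀ ℕ) (h : m (Fin.last k) = 0) :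
    ext1 (res1 m) = m := by
  ext a
  rcases Fin.eq_castSucc_or_eq_last a with ⟨j, rfl⟩ | rfl
  · rw [ext1_apply_castSucc, res1_apply]
  · rw [ext1_apply_last, h]

lemma degree_res1 {k : ℕ} (m : Fin (k + 1) →₀ ℕ) :
    Finsupp.degree m = Finsupp.degree (res1 m) + m (Fin.last k) := by
  rw [← sum_univ_eq_degree, ← sum_univ_eq_degree, Fin.sum_univ_castSucc]
  rfl


lemma res1_apply_mk {k i : ℕ} (h : i < k) (hk : i < k + 1) (m : Fin (k + 1) →₀ ℕ) :
    res1 m ⟨i, h⟩ = m ⟨i, hk⟩ := rfl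

lemma igood_ext1 {k : ℕ} {m : Fin k →₀ ℕ} (h : IGood k m) : IGood (k + 1) (ext1 m) := by
  intro i hi
  by_cases hik : i + 1 < k
  · rw [ext1_apply_mk (Nat.lt_of_succ_lt hik), ext1_apply_mk hik]
    exact h i hik
  · right
    have hik' : i + 1 = k := by omega
    have : (⟨i + 1, hi⟩ : Fin (k + 1)) = Fin.last k := Fin.ext (by simp [hik'])
    rw [this, ext1_apply_last]

lemma igood_res1 {k : ℕ} {m : Fin (k + 1) →₀ ℕ} (h : IGood (k + 1) m) :
    IGood k (res1 m) := by
  intro i hi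
  exact h i (Nat.lt_succ_of_lt hi)

lemma cnt_zero (d : ℕ) : cnt 0 d = if d = 0 then 1 else 0 := by
  have hm0 : ∀ m : Fin 0 →₀ ℕ, m = 0 := fun m => Finsupp.ext (fun a => a.elim0)
  rcases Nat.eq_zero_or_pos d with rfl | hd
  · rw [if_pos rfl]
    have : goodFinset (SimpleGraph.pathGraph 0) 0 = {(0 : Fin 0 →₀ ℕ)} := by
      ext m
      simp only [mem_goodFinset, Finset.mem_singleton]
      constructor
      · intro _; exact hm0 m
      · rintro rfl
        exact ⟨map_zero _, fun v => v.elim0⟩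
    rw [cnt, this, Finset.card_singleton]
  · rw [if_neg hd.ne']
    have : goodFinset (SimpleGraph.pathGraph 0) d = ∅ := by
      apply Finset.eq_empty_of_forall_notMem
      intro m hm
      rw [mem_goodFinset, hm0 m] at hm
      rw [map_zero] at hm
      omega
    rw [cnt, this, Finset.card_empty]

lemma cnt_one (d : ℕ) : cnt 1 d = 1 := by
  have key : goodFinset (SimpleGraph.pathGraph 1) d = {Finsupp.single (0 : Fin 1) d} := by
    ext m
    simp only [mem_goodFinset, Finset.mem_singleton]
    constructor
    · rintro ⟨hd, -⟩
      have hm0 : m 0 = d := by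
        rw [← hd, ← sum_univ_eq_degree]
        exact Fin.sum_univ_one m
      refine Finsupp.ext fun a => ?_
      have ha : a = 0 := Subsingleton.elim a 0
      rw [ha, hm0, Finsupp.single_eq_same]
    · rintro rfl
      constructor
      · rw [← sum_univ_eq_degree, Fin.sum_univ_one, Finsupp.single_eq_same]
      · rw [good_pathGraph_iff]
        intro i hi
        omega
  rw [cnt, key, Finset.card_singleton]

/-- extend by two variables, second-to-top zero, top equal to `e` -/
noncomputable def ext2 {n : ℕ} (e : ℕ) (m : Fin n →₀ ℕ) : Fin (n + 2) →₀ ℕ :=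
  ext1 (ext1 m) + Finsupp.single (Fin.last (n + 1)) e

lemma ext2_apply_cc {n : ℕ} (e : ℕ) (m : Fin n →₀ ℕ) (c : Fin n) :
    ext2 e m c.castSucc.castSucc = m c := by
  rw [ext2, Finsupp.add_apply, ext1_apply_castSucc, ext1_apply_castSucc,
    Finsupp.single_eq_of_ne' (Fin.castSucc_lt_last _).ne', add_zero]

lemma ext2_apply_cl {n : ℕ} (e : ℕ) (m : Fin n →₀ ℕ) :
    ext2 e m (Fin.last n).castSucc = 0 := by
  rw [ext2, Finsupp.add_apply, ext1_apply_castSucc, ext1_apply_last,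
    Finsupp.single_eq_of_ne' (Fin.castSucc_lt_last _).ne', add_zero]

lemma ext2_apply_last {n : ℕ} (e : ℕ) (m : Fin n →₀ ℕ) :
    ext2 e m (Fin.last (n + 1)) = e := by
  rw [ext2, Finsupp.add_apply, ext1_apply_last, Finsupp.single_eq_same, zero_add]

lemma res1_ext2 {n : ℕ} (e : ℕ) (m : Fin n →₀ ℕ) : res1 (ext2 e m) = ext1 m := by
  ext i
  rw [res1_apply]
  rcases Fin.eq_castSucc_or_eq_last i with ⟨c, rfl⟩ | rfl
  · rw [ext2_apply_cc, ext1_apply_castSucc]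
  · rw [ext2_apply_cl, ext1_apply_last]

lemma res1_res1_ext2 {n : ℕ} (e : ℕ) (m : Fin n →₀ ℕ) : res1 (res1 (ext2 e m)) = m := by
  rw [res1_ext2, res1_ext1]

lemma degree_ext2 {n : ℕ} (e : ℕ) (m : Fin n →₀ ℕ) :
    Finsupp.degree (ext2 e m) = Finsupp.degree m + e := by
  rw [degree_res1 (ext2 e m), res1_ext2, degree_ext1, ext2_apply_last]

lemma ext2_apply_mk {n i : ℕ} (h : i < n) (h2 : i < n + 2) (e : ℕ) (m : Fin n →₀ ℕ) :
    ext2 e m ⟨i, h2⟩ = m ⟨i, h⟩ := by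
  have : (⟨i, h2⟩ : Fin (n + 2)) = (⟨i, h⟩ : Fin n).castSucc.castSucc := rfl
  rw [this, ext2_apply_cc]

lemma ext2_apply_mk_n {n : ℕ} (h2 : n < n + 2) (e : ℕ) (m : Fin n →₀ ℕ) :
    ext2 e m ⟨n, h2⟩ = 0 := by
  have : (⟨n, h2⟩ : Fin (n + 2)) = (Fin.last n).castSucc := rfl
  rw [this, ext2_apply_cl]

lemma igood_ext2 {n : ℕ} (e : ℕ) {m : Fin n →₀ ℕ} (h : IGood n m) :
    IGood (n + 2) (ext2 e m) := by
  intro i hi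
  by_cases hin : i + 1 < n
  · rw [ext2_apply_mk (Nat.lt_of_succ_lt hin), ext2_apply_mk hin]
    exact h i hin
  by_cases hin' : i + 1 = n
  · right
    have : (⟨i + 1, hi⟩ : Fin (n + 2)) = ⟨n, by omega⟩ := Fin.ext (by simp [hin'])
    rw [this, ext2_apply_mk_n]
  · left
    have hieq : i = n := by omega
    have : (⟨i, Nat.lt_of_succ_lt hi⟩ : Fin (n + 2)) = ⟨n, by omega⟩ := Fin.ext (by simp [hieq])
    rw [this, ext2_apply_mk_n]

lemma cnt_rec (n d : ℕ) :
    cnt (n + 2) d = cnt (n + 1) d + ∑ e ∈ Finset.Icc 1 d, cnt n (d - e) := by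
  classical
  set L : Fin (n + 2) := Fin.last (n + 1) with hL
  set A := goodFinset (SimpleGraph.pathGraph (n + 2)) d with hA
  have hsplit := Finset.card_filter_add_card_filter_not
      (s := A) (p := fun m => m L = 0)
  have h1 : (A.filter fun m => m L = 0).card = cnt (n + 1) d := by
    apply Finset.card_nbij' res1 ext1
    · intro m hm
      rw [Finset.mem_coe, Finset.mem_filter, hA, mem_goodFinset] at hm
      obtain ⟨⟨hdeg, hgood⟩, hm0⟩ := hm
      rw [Finset.mem_coe, mem_goodFinset]
      constructor
      · have := degree_res1 m
        rw [hm0, add_zero] at this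
        omega
      · rw [good_pathGraph_iff] at hgood ⊢
        exact igood_res1 hgood
    · intro m hm
      rw [Finset.mem_coe, mem_goodFinset] at hm
      rw [Finset.mem_coe, Finset.mem_filter, hA, mem_goodFinset]
      refine ⟨⟨?_, ?_⟩, ?_⟩
      · rw [degree_ext1]; exact hm.1
      · rw [good_pathGraph_iff]
        exact igood_ext1 ((good_pathGraph_iff).mp hm.2)
      · exact ext1_apply_last m
    · intro m hm
      rw [Finset.mem_coe, Finset.mem_filter] at hm
      exact ext1_res1 m hm.2
    · intro m _
      exact res1_ext1 m
  have h2 : (A.filter fun m => ¬ m L = 0).card = ∑ e ∈ Finset.Icc 1 d, cnt n (d - e) := by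
    rw [Finset.card_eq_sum_card_fiberwise (f := fun m => m L) (t := Finset.Icc 1 d) ?_]
    · apply Finset.sum_congr rfl
      intro e he
      rw [Finset.mem_Icc] at he
      apply Finset.card_nbij' (fun m => res1 (res1 m)) (ext2 e)
      · intro m hm
        rw [Finset.mem_coe, Finset.mem_filter, Finset.mem_filter, hA, mem_goodFinset] at hm
        obtain ⟨⟨⟨hdeg, hgood⟩, hm0⟩, hme⟩ := hm
        rw [good_pathGraph_iff] at hgood
        have hmn : m ⟨n, by omega⟩ = 0 := by
          rcases hgood n (by omega) with h0 | h0
          · exact h0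
          · exfalso
            have : (⟨n + 1, by omega⟩ : Fin (n + 2)) = L := rfl
            rw [this, hme] at h0
            exact hm0 (by rw [hme, h0])
        rw [Finset.mem_coe, mem_goodFinset]
        constructor
        · have hd1 := degree_res1 m
          have hd2 := degree_res1 (res1 m)
          have : res1 m (Fin.last n) = m ⟨n, by omega⟩ := rfl
          rw [this, hmn, add_zero] at hd2
          rw [← hL, hme] at hd1
          beta_reduce; omega
        · rw [good_pathGraph_iff]
          exact igood_res1 (igood_res1 hgood)
      · intro m hm
        rw [Finset.mem_coe, mem_goodFinset] at hm
        rw [Finset.mem_coe, Finset.mem_filter, Finset.mem_filter, hA, mem_goodFinset]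
        refine ⟨⟨⟨?_, ?_⟩, ?_⟩, ?_⟩
        · rw [degree_ext2, hm.1]; omega
        · rw [good_pathGraph_iff]
          exact igood_ext2 e ((good_pathGraph_iff).mp hm.2)
        · rw [hL, ext2_apply_last]; omega
        · rw [hL, ext2_apply_last]
      · intro m hm
        rw [Finset.mem_coe, Finset.mem_filter, Finset.mem_filter, hA, mem_goodFinset] at hm
        obtain ⟨⟨⟨hdeg, hgood⟩, hm0⟩, hme⟩ := hm
        rw [good_pathGraph_iff] at hgood
        have hmn : m ⟨n, by omega⟩ = 0 := by
          rcases hgood n (by omega) with h0 | h0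
          · exact h0
          · exfalso
            have : (⟨n + 1, by omega⟩ : Fin (n + 2)) = L := rfl
            rw [this, hme] at h0
            exact hm0 (by rw [hme, h0])
        ext a
        rcases Fin.eq_castSucc_or_eq_last a with ⟨b, rfl⟩ | rfl
        · rcases Fin.eq_castSucc_or_eq_last b with ⟨c, rfl⟩ | rfl
          · rw [ext2_apply_cc]; rfl
          · rw [ext2_apply_cl]
            exact hmn.symm
        · rw [ext2_apply_last, ← hL, hme]
      · intro m _
        exact res1_res1_ext2 e m
    · intro m hm
      rw [Finset.mem_coe, Finset.mem_filter, hA, mem_goodFinset] at hm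
      obtain ⟨⟨hdeg, -⟩, hm0⟩ := hm
      simp only [Finset.mem_coe, Finset.mem_Icc]
      have := Finsupp.le_degree L m
      rw [hdeg] at this
      omega
  rw [cnt, ← hsplit, h1, h2]


end PartB


section PartC
open PowerSeries Polynomial

/-- the h-polynomial candidates -/
noncomputable def q : ℕ → Polynomial ℚ
  | 0 => 1
  | 1 => 1
  | (n + 2) => if n % 2 = 0 then q (n + 1) + Polynomial.X * q n
               else (1 - Polynomial.X) * q (n + 1) + Polynomial.X * q n

lemma q_even (n : ℕ) (h : n % 2 = 0) :
    q (n + 2) = q (n + 1) + Polynomial.X * q n := by rw [q, if_pos h]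

lemma q_odd (n : ℕ) (h : n % 2 = 1) :
    q (n + 2) = (1 - Polynomial.X) * q (n + 1) + Polynomial.X * q n := by
  rw [q, if_neg (by omega)]

section series

variable (c : ℕ → ℕ → ℕ)
    (h0 : ∀ d, c 0 d = if d = 0 then 1 else 0)
    (h1 : ∀ d, c 1 d = 1)
    (hrec : ∀ n d, c (n + 2) d = c (n + 1) d + ∑ e ∈ Finset.Icc 1 d, c n (d - e))

/-- abstract Hilbert series -/
noncomputable def Hs (n : ℕ) : PowerSeries ℚ := PowerSeries.mk fun d => (c n d : ℚ)

lemma sum_Icc_sub (f : ℕ → ℕ) (d : ℕ) :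
    ∑ e ∈ Finset.Icc 1 d, f (d - e) = ∑ j ∈ Finset.range d, f j := by
  apply Finset.sum_nbij' (fun e => d - e) (fun j => d - j)
  · intro e he
    rw [Finset.mem_Icc] at he
    rw [Finset.mem_range]
    omega
  · intro j hj
    rw [Finset.mem_range] at hj
    rw [Finset.mem_Icc]
    omega
  · intro e he
    rw [Finset.mem_Icc] at he
    omega
  · intro j hj
    rw [Finset.mem_range] at hj
    omega
  · intro e he
    rfl

include hrec in
lemma step (n : ℕ) :
    (1 - PowerSeries.X) * Hs c (n + 2) =
      (1 - PowerSeries.X) * Hs c (n + 1) + PowerSeries.X * Hs c n := by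
  have expand : ∀ m : ℕ, (1 - PowerSeries.X) * Hs c m = Hs c m - PowerSeries.X * Hs c m := by
    intro m; ring
  rw [expand, expand]
  ext d
  simp only [map_sub, map_add]
  cases d with
  | zero =>
      rw [coeff_zero_X_mul, coeff_zero_X_mul, coeff_zero_X_mul]
      simp only [Hs, coeff_mk, sub_zero, add_zero]
      rw [hrec n 0]
      simp
  | succ d =>
      rw [coeff_succ_X_mul, coeff_succ_X_mul, coeff_succ_X_mul]
      simp only [Hs, coeff_mk]
      have hA := hrec (n) (d + 1)
      have hB := hrec (n) d
      rw [sum_Icc_sub, Finset.sum_range_succ] at hA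
      rw [sum_Icc_sub] at hB
      rw [hA, hB]
      push_cast
      ring


include h0 in
lemma hs_zero : Hs c 0 = 1 := by
  ext d
  rw [Hs, coeff_mk, PowerSeries.coeff_one, h0]
  split_ifs <;> simp

include h1 in
lemma hs_one : Hs c 1 * (1 - PowerSeries.X) = 1 := by
  have expand : Hs c 1 * (1 - PowerSeries.X) = Hs c 1 - Hs c 1 * PowerSeries.X := by ring
  rw [expand]
  ext d
  rw [map_sub, PowerSeries.coeff_one]
  cases d with
  | zero => rw [coeff_zero_mul_X, Hs, coeff_mk, h1]; simp
  | succ d =>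
      rw [coeff_succ_mul_X, Hs, coeff_mk, coeff_mk, h1, h1]
      simp

include h0 h1 hrec in
lemma hs_eq (n : ℕ) :
    Hs c n * (1 - PowerSeries.X) ^ ((n + 1) / 2) = (q n : PowerSeries ℚ) := by
  induction n using Nat.strong_induction_on with
  | _ n ih =>
    match n with
    | 0 => rw [show q 0 = 1 from rfl, Polynomial.coe_one, hs_zero c h0]; simp
    | 1 => rw [show q 1 = 1 from rfl, Polynomial.coe_one]; simpa using hs_one c h1
    | (m + 2) =>
      have ih0 := ih m (by omega)
      have ih1 := ih (m + 1) (by omega)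
      have hexp : (m + 2 + 1) / 2 = (m + 1) / 2 + 1 := by omega
      rw [hexp]
      have e1 : Hs c (m + 2) * (1 - PowerSeries.X) ^ ((m + 1) / 2 + 1) =
          ((1 - PowerSeries.X) * Hs c (m + 2)) * (1 - PowerSeries.X) ^ ((m + 1) / 2) := by
        ring
      rw [e1, step c hrec m]
      rcases Nat.even_or_odd m with hm | hm
      · have hpar : m % 2 = 0 := Nat.even_iff.mp hm
        have hD1 : (m + 1 + 1) / 2 = (m + 1) / 2 + 1 := by omega
        have e2 : ((1 - PowerSeries.X) * Hs c (m + 1) + PowerSeries.X * Hs c m) *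
              (1 - PowerSeries.X) ^ ((m + 1) / 2) =
            Hs c (m + 1) * (1 - PowerSeries.X) ^ ((m + 1) / 2 + 1) +
              PowerSeries.X * (Hs c m * (1 - PowerSeries.X) ^ ((m + 1) / 2)) := by
          ring
        have ih1' := ih1
        rw [hD1] at ih1'
        rw [e2, ih1', ih0, q_even m hpar, Polynomial.coe_add, Polynomial.coe_mul,
          Polynomial.coe_X]
      · have hpar : m % 2 = 1 := Nat.odd_iff.mp hm
        have hD1 : (m + 1 + 1) / 2 = (m + 1) / 2 := by omega
        have e2 : ((1 - PowerSeries.X) * Hs c (m + 1) + PowerSeries.X * Hs c m) *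
              (1 - PowerSeries.X) ^ ((m + 1) / 2) =
            (1 - PowerSeries.X) * (Hs c (m + 1) * (1 - PowerSeries.X) ^ ((m + 1) / 2)) +
              PowerSeries.X * (Hs c m * (1 - PowerSeries.X) ^ ((m + 1) / 2)) := by
          ring
        have ih1' := ih1
        rw [hD1] at ih1'
        rw [e2, ih1', ih0, q_odd m hpar, Polynomial.coe_add, Polynomial.coe_mul,
          Polynomial.coe_mul, Polynomial.coe_X, Polynomial.coe_sub, Polynomial.coe_one,
          Polynomial.coe_X]

end series

end PartC



noncomputable def tf (n : ℕ) : ℚ := let r := n % 12; if r = 0 then (1 : ℚ) else if r = 1 then (0 : ℚ) else if r = 2 then (1 : ℚ) else if r = 3 then (-1 : ℚ) else if r = 4 then (0 : ℚ) else if r = 5 then (-1 : ℚ) else if r = 6 then (-1 : ℚ) else if r = 7 then (0 : ℚ) else if r = 8 then (-1 : ℚ) else if r = 9 then (1 : ℚ) else if r = 10 then (0 : ℚ) else (1 : ℚ)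
noncomputable def av (n : ℕ) : ℚ := let r := n % 12; if r = 0 then (0 : ℚ) else if r = 1 then (4 : ℚ) else if r = 2 then (4 : ℚ) else if r = 3 then (3 : ℚ) else if r = 4 then (4 : ℚ) else if r = 5 then (-1 : ℚ) else if r = 6 then (0 : ℚ) else if r = 7 then (-4 : ℚ) else if r = 8 then (-4 : ℚ) else if r = 9 then (-3 : ℚ) else if r = 10 then (-4 : ℚ) else (1 : ℚ)
noncomputable def bv (n : ℕ) : ℚ := let r := n % 12; if r = 0 then (-1 : ℚ) else if r = 1 then (2 : ℚ) else if r = 2 then (1 : ℚ) else if r = 3 then (1 : ℚ) else if r = 4 then (2 : ℚ) else if r = 5 then (-1 : ℚ) else if r = 6 then (1 : ℚ) else if r = 7 then (-2 : ℚ) else if r = 8 then (-1 : ℚ) else if r = 9 then (-1 : ℚ) else if r = 10 then (-2 : ℚ) else (1 : ℚ)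
noncomputable def sf (n : ℕ) : ℚ := (av n + bv n * n) / 6

lemma tf_even (n : ℕ) (hp : n % 2 = 0) : tf (n + 2) = tf (n + 1) + tf n := by
  have h12 : n % 12 = 0 ∨ n % 12 = 2 ∨ n % 12 = 4 ∨ n % 12 = 6 ∨ n % 12 = 8 ∨ n % 12 = 10 := by omega
  rcases h12 with h|h|h|h|h|h <;>
  · have e1 : (n + 1) % 12 = (n % 12 + 1) % 12 := by omega
    have e2 : (n + 2) % 12 = (n % 12 + 2) % 12 := by omega
    simp only [tf, sf, av, bv, h, e1, e2]
    push_cast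
    ring

lemma sf_even (n : ℕ) (hp : n % 2 = 0) : sf (n + 2) = sf (n + 1) + sf n := by
  have h12 : n % 12 = 0 ∨ n % 12 = 2 ∨ n % 12 = 4 ∨ n % 12 = 6 ∨ n % 12 = 8 ∨ n % 12 = 10 := by omega
  rcases h12 with h|h|h|h|h|h <;>
  · have e1 : (n + 1) % 12 = (n % 12 + 1) % 12 := by omega
    have e2 : (n + 2) % 12 = (n % 12 + 2) % 12 := by omega
    simp only [tf, sf, av, bv, h, e1, e2]
    push_cast
    ring

lemma tf_odd (n : ℕ) (hp : n % 2 = 1) : tf (n + 2) = tf n - tf (n + 1) := by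
  have h12 : n % 12 = 1 ∨ n % 12 = 3 ∨ n % 12 = 5 ∨ n % 12 = 7 ∨ n % 12 = 9 ∨ n % 12 = 11 := by omega
  rcases h12 with h|h|h|h|h|h <;>
  · have e1 : (n + 1) % 12 = (n % 12 + 1) % 12 := by omega
    have e2 : (n + 2) % 12 = (n % 12 + 2) % 12 := by omega
    simp only [tf, sf, av, bv, h, e1, e2]
    push_cast
    ring

lemma sf_odd (n : ℕ) (hp : n % 2 = 1) : sf (n + 2) = tf (n + 1) - sf (n + 1) + sf n := by
  have h12 : n % 12 = 1 ∨ n % 12 = 3 ∨ n % 12 = 5 ∨ n % 12 = 7 ∨ n % 12 = 9 ∨ n % 12 = 11 := by omega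
  rcases h12 with h|h|h|h|h|h <;>
  · have e1 : (n + 1) % 12 = (n % 12 + 1) % 12 := by omega
    have e2 : (n + 2) % 12 = (n % 12 + 2) % 12 := by omega
    simp only [tf, sf, av, bv, h, e1, e2]
    push_cast
    ring



lemma q_eval_one_pos (n : ℕ) : 0 < (q n).eval 1 := by
  suffices h : ∀ m, 0 < (q m).eval 1 ∧ 0 < (q (m + 1)).eval 1 from (h n).1
  intro m
  induction m with
  | zero => constructor <;> norm_num [q]
  | succ m ih =>
    refine ⟨ih.2, ?_⟩
    rcases Nat.even_or_odd m with hm | hm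
    · rw [q_even m (Nat.even_iff.mp hm)]
      simp only [Polynomial.eval_add, Polynomial.eval_mul, Polynomial.eval_X]
      nlinarith [ih.1, ih.2]
    · rw [q_odd m (Nat.odd_iff.mp hm)]
      simp only [Polynomial.eval_add, Polynomial.eval_mul, Polynomial.eval_X,
        Polynomial.eval_sub, Polynomial.eval_one]
      nlinarith [ih.1, ih.2]

def St (k : ℕ) : Prop :=
  (q k).natDegree ≤ (k + 1) / 2 ∧
  (q k).coeff ((k + 1) / 2) = tf k ∧
  (q k).coeff ((k + 1) / 2 - 1) = sf k

lemma st_one : St 1 := by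
  refine ⟨?_, ?_, ?_⟩
  · rw [show q 1 = 1 from rfl]
    simp
  · rw [show q 1 = 1 from rfl, show (1 + 1) / 2 = 1 from rfl, Polynomial.coeff_one]
    norm_num [tf]
  · rw [show q 1 = 1 from rfl, show (1 + 1) / 2 - 1 = 0 from rfl, Polynomial.coeff_one]
    norm_num [sf, av, bv]

lemma q_two : q 2 = 1 + Polynomial.X := by
  rw [show (2 : ℕ) = 0 + 2 from rfl, q_even 0 rfl, show q 1 = 1 from rfl,
    show q 0 = 1 from rfl, mul_one]

lemma st_two : St 2 := by
  refine ⟨?_, ?_, ?_⟩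
  · rw [q_two]
    apply le_trans (Polynomial.natDegree_add_le _ _)
    simp
  · rw [q_two, show (2 + 1) / 2 = 1 from rfl, Polynomial.coeff_add, Polynomial.coeff_one,
      Polynomial.coeff_X_one]
    norm_num [tf]
  · rw [q_two, show (2 + 1) / 2 - 1 = 0 from rfl, Polynomial.coeff_add, Polynomial.coeff_one,
      Polynomial.coeff_X_zero]
    norm_num [sf, av, bv]

lemma st_step (k : ℕ) (hk : 1 ≤ k) (H1 : St k) (H2 : St (k + 1)) : St (k + 2) := by
  obtain ⟨hd1, ht1, hs1⟩ := H1
  obtain ⟨hd2, ht2, hs2⟩ := H2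
  have hDpos : 1 ≤ (k + 1) / 2 := by omega
  obtain ⟨i, hi⟩ : ∃ i, (k + 1) / 2 = i + 1 := ⟨(k + 1) / 2 - 1, by omega⟩
  rcases Nat.even_or_odd k with hm | hm
  · -- k even, k ≥ 2
    have hp : k % 2 = 0 := Nat.even_iff.mp hm
    have hD1 : (k + 1 + 1) / 2 = (k + 1) / 2 + 1 := by omega
    have hD2 : (k + 2 + 1) / 2 = (k + 1) / 2 + 1 := by omega
    rw [St, q_even k hp, hD2]
    refine ⟨?_, ?_, ?_⟩
    · apply le_trans (Polynomial.natDegree_add_le _ _)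
      apply max_le
      · omega
      · apply le_trans (Polynomial.natDegree_mul_le)
        have := Polynomial.natDegree_X_le (R := ℚ)
        omega
    · rw [Polynomial.coeff_add, Polynomial.coeff_X_mul, ht1, ← hD1, ht2, tf_even k hp]
    · rw [Nat.add_sub_cancel, Polynomial.coeff_add, hi, Polynomial.coeff_X_mul,
        sf_even k hp]
      have e1 : (q (k + 1)).coeff (i + 1) = sf (k + 1) := by
        rw [← hs2, hD1, hi]
        norm_num
      have e2 : (q k).coeff i = sf k := by
        rw [← hs1, hi]
        norm_num
      rw [e1, e2]
  · -- k odd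
    have hp : k % 2 = 1 := Nat.odd_iff.mp hm
    have hD1 : (k + 1 + 1) / 2 = (k + 1) / 2 := by omega
    have hD2 : (k + 2 + 1) / 2 = (k + 1) / 2 + 1 := by omega
    have hexpand : q (k + 2) =
        q (k + 1) - Polynomial.X * q (k + 1) + Polynomial.X * q k := by
      rw [q_odd k hp, sub_mul, one_mul]
    rw [St, hexpand, hD2]
    have hXd : (Polynomial.X : Polynomial ℚ).natDegree ≤ 1 := Polynomial.natDegree_X_le
    refine ⟨?_, ?_, ?_⟩
    · apply le_trans (Polynomial.natDegree_add_le _ _)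
      apply max_le
      · apply le_trans (Polynomial.natDegree_sub_le _ _)
        apply max_le
        · omega
        · apply le_trans (Polynomial.natDegree_mul_le); omega
      · apply le_trans (Polynomial.natDegree_mul_le); omega
    · rw [Polynomial.coeff_add, Polynomial.coeff_sub, Polynomial.coeff_X_mul,
        Polynomial.coeff_X_mul]
      have hz : (q (k + 1)).coeff ((k + 1) / 2 + 1) = 0 := by
        apply Polynomial.coeff_eq_zero_of_natDegree_lt
        omega
      rw [hz, ht1, ← hD1, ht2, tf_odd k hp]
      ring
    · rw [Nat.add_sub_cancel, Polynomial.coeff_add, Polynomial.coeff_sub, hi,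
        Polynomial.coeff_X_mul, Polynomial.coeff_X_mul, sf_odd k hp]
      have e0 : (q (k + 1)).coeff (i + 1) = tf (k + 1) := by rw [← ht2, hD1, hi]
      have e1 : (q (k + 1)).coeff i = sf (k + 1) := by
        rw [← hs2, hD1, hi]
        norm_num
      have e2 : (q k).coeff i = sf k := by
        rw [← hs1, hi]
        norm_num
      rw [e0, e1, e2]

lemma st_all (n : ℕ) : St (n + 1) := by
  suffices h : ∀ m, St (m + 1) ∧ St (m + 2) from (h n).1
  intro m
  induction m with
  | zero => exact ⟨st_one, st_two⟩
  | succ m ih => exact ⟨ih.2, st_step (m + 1) (by omega) ih.1 ih.2⟩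

lemma tf_ne_zero (n : ℕ) (h3 : n % 3 ≠ 1) : tf n ≠ 0 := by
  have h12 : n % 12 = 0 ∨ n % 12 = 2 ∨ n % 12 = 3 ∨ n % 12 = 5 ∨ n % 12 = 6 ∨
      n % 12 = 8 ∨ n % 12 = 9 ∨ n % 12 = 11 := by omega
  rcases h12 with h|h|h|h|h|h|h|h <;> norm_num [tf, h]

lemma tf_eq_zero (n : ℕ) (h3 : n % 3 = 1) : tf n = 0 := by
  have h12 : n % 12 = 1 ∨ n % 12 = 4 ∨ n % 12 = 7 ∨ n % 12 = 10 := by omega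
  rcases h12 with h|h|h|h <;> norm_num [tf, h]

lemma sf_ne_zero (n : ℕ) (h3 : n % 3 = 1) : sf n ≠ 0 := by
  have h12 : n % 12 = 1 ∨ n % 12 = 4 ∨ n % 12 = 7 ∨ n % 12 = 10 := by omega
  have hn : (0 : ℚ) ≤ (n : ℚ) := Nat.cast_nonneg n
  rcases h12 with h|h|h|h <;>
  · simp only [sf, av, bv, h]
    norm_num
    intro hc
    nlinarith

lemma q_natDegree (n : ℕ) (hn : 1 ≤ n) :
    (q n).natDegree = if n % 3 = 1 then (n + 1) / 2 - 1 else (n + 1) / 2 := by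
  obtain ⟨m, rfl⟩ : ∃ m, n = m + 1 := ⟨n - 1, by omega⟩
  obtain ⟨hd, ht, hs⟩ := st_all m
  by_cases h3 : (m + 1) % 3 = 1
  · rw [if_pos h3]
    have hDpos : 1 ≤ (m + 1 + 1) / 2 := by omega
    have htz : (q (m + 1)).coeff ((m + 1 + 1) / 2) = 0 := by
      rw [ht]; exact tf_eq_zero _ h3
    have hsz : (q (m + 1)).coeff ((m + 1 + 1) / 2 - 1) ≠ 0 := by
      rw [hs]; exact sf_ne_zero _ h3
    have hq0 : q (m + 1) ≠ 0 := by
      intro h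
      have := q_eval_one_pos (m + 1)
      rw [h] at this
      simp at this
    have hlead : (q (m + 1)).coeff ((q (m + 1)).natDegree) ≠ 0 :=
      Polynomial.leadingCoeff_ne_zero.mpr hq0
    have hle : (q (m + 1)).natDegree ≤ (m + 1 + 1) / 2 - 1 := by
      by_contra hlt
      push_neg at hlt
      have hdeq : (q (m + 1)).natDegree = (m + 1 + 1) / 2 := by omega
      rw [hdeq, htz] at hlead
      exact hlead rfl
    have hge := Polynomial.le_natDegree_of_ne_zero hsz
    omega
  · rw [if_neg h3]
    have htnz : (q (m + 1)).coeff ((m + 1 + 1) / 2) ≠ 0 := by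
      rw [ht]; exact tf_ne_zero _ h3
    have hge := Polynomial.le_natDegree_of_ne_zero htnz
    omega


end PathH

/-- For the path graph `Pₙ` on `n ≥ 2` vertices, the degree of the `h`-polynomial of
`S/I(Pₙ)` equals `⌈n/2⌉` if `n ≡ 0, 2 (mod 3)` and `⌈n/2⌉ - 1` if `n ≡ 1 (mod 3)`.
(Here `dim S/I(Pₙ) = ⌈n/2⌉ = (n+1)/2` in natural-number division.) -/
theorem pathGraph_deg_h (K : Type) [Field K] (n : ℕ) (hn : 2 ≤ n) :
    ∃ p : Polynomial ℚ,
      hilbertSeries K (edgeIdeal K (SimpleGraph.pathGraph n)) *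
          (1 - PowerSeries.X) ^ ((n + 1) / 2) = (p : PowerSeries ℚ) ∧
      p.eval 1 ≠ 0 ∧
      p.natDegree = if n % 3 = 1 then (n + 1) / 2 - 1 else (n + 1) / 2 := by
  refine ⟨PathH.q n, ?_, ?_, ?_⟩
  · have hser : hilbertSeries K (edgeIdeal K (SimpleGraph.pathGraph n)) = PathH.Hs PathH.cnt n := by
      ext d
      rw [PathH.Hs, PowerSeries.coeff_mk]
      exact PathH.coeff_hilbertSeries K (SimpleGraph.pathGraph n) d
    rw [hser]
    exact PathH.hs_eq PathH.cnt PathH.cnt_zero PathH.cnt_one PathH.cnt_rec n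
  · exact ne_of_gt (PathH.q_eval_one_pos n)
  · exact PathH.q_natDegree n (by omega)
end

section
/- Let $G$ be a Cameron--Walker graph with standard labeling. Then $\deg h(S/I(G), \lambda) \geq \operatorname{reg}(S/I(G))$, with equality if and only if $s_i = 1$ for all $1 \leq i \leq m$ and $t_j \geq 1$ for all $1 \leq j \leq n$. Equivalently, in combinatorial terms: $\sum_{i=1}^m s_i + \sum_{j=1}^n \max\{t_j, 1\} \geq \sum_{j=1}^n t_j + m$, with equality iff all $s_i = 1$ and all $t_j \geq 1$. -/
/-- Vertices of a Cameron–Walker graph with standard labeling: the `vᵢ`, the `wⱼ`,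
the leaves `x^(i)_k` (`1 ≤ k ≤ sᵢ`), and the pendant-triangle vertices
`y^(j)_{ℓ,1}, y^(j)_{ℓ,2}` (`1 ≤ ℓ ≤ tⱼ`). -/
abbrev CWVert (m n : ℕ) (s : Fin m → ℕ) (t : Fin n → ℕ) : Type :=
  Fin m ⊕ Fin n ⊕ (Σ i : Fin m, Fin (s i)) ⊕ (Σ j : Fin n, Fin (t j) × Fin 2)

def cwRel (m n : ℕ) (s : Fin m → ℕ) (t : Fin n → ℕ) (B : Fin m → Fin n → Prop) :
    CWVert m n s t → CWVert m n s t → Prop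
  | Sum.inl i, Sum.inr (Sum.inl j) => B i j
  | Sum.inl i, Sum.inr (Sum.inr (Sum.inl ⟨i', _⟩)) => i = i'
  | Sum.inr (Sum.inl j), Sum.inr (Sum.inr (Sum.inr ⟨j', _, _⟩)) => j = j'
  | Sum.inr (Sum.inr (Sum.inr ⟨j, ℓ, _⟩)), Sum.inr (Sum.inr (Sum.inr ⟨j', ℓ', _⟩)) =>
      j = j' ∧ (ℓ : ℕ) = (ℓ' : ℕ)
  | _, _ => False

/-- The Cameron–Walker graph determined by the data `m, n, s, t, B`: a bipartite part
on `{v₁,…,v_m} ∪ {w₁,…,w_n}` with edges given by `B`, `s i` leaf edges attached to `vᵢ`,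
and `t j` pendant triangles attached to `wⱼ`. -/
def cwGraph (m n : ℕ) (s : Fin m → ℕ) (t : Fin n → ℕ) (B : Fin m → Fin n → Prop) :
    SimpleGraph (CWVert m n s t) :=
  SimpleGraph.fromRel (cwRel m n s t B)

/-- The bipartite part of the Cameron–Walker graph. -/
def bipGraph (m n : ℕ) (B : Fin m → Fin n → Prop) : SimpleGraph (Fin m ⊕ Fin n) :=
  SimpleGraph.fromRel fun a b =>
    match a, b with
    | Sum.inl i, Sum.inr j => B i j
    | _, _ => False

/-- An independent dominating set: an independent set `A` with `A ∪ N_G(A) = V(G)`. -/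
def IsIndepDomSet {V : Type} (G : SimpleGraph V) (A : Finset V) : Prop :=
  (∀ a ∈ A, ∀ b ∈ A, ¬ G.Adj a b) ∧ (∀ v, v ∈ A ∨ ∃ a ∈ A, G.Adj a v)

/-- `i(G)`: the minimum cardinality of an independent dominating set of `G`. -/
noncomputable def indepDomNumber {V : Type} (G : SimpleGraph V) : ℕ :=
  sInf {k | ∃ A : Finset V, IsIndepDomSet G A ∧ A.card = k}

/-- The independence number: the maximum cardinality of an independent set of `G`. -/
noncomputable def indepNumber {V : Type} [Fintype V] (G : SimpleGraph V) : ℕ :=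
  sSup {k | ∃ A : Finset V, (∀ a ∈ A, ∀ b ∈ A, ¬ G.Adj a b) ∧ A.card = k}

/-- The matching number: the maximum cardinality of a matching of `G`. -/
noncomputable def matchingNumber {V : Type} [Fintype V] (G : SimpleGraph V) : ℕ :=
  sSup {k | ∃ M : Finset (Sym2 V), (∀ e ∈ M, e ∈ G.edgeSet) ∧
    (∀ e ∈ M, ∀ e' ∈ M, e ≠ e' → ∀ v, v ∈ e → v ∉ e') ∧ M.card = k}
/-- For a Cameron–Walker graph `G` with standard labeling,
`deg h(S/I(G), λ) ≥ reg S/I(G)`, with equality iff `sᵢ = 1` for all `i` and `tⱼ ≥ 1`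
for all `j`.  In combinatorial terms (using
`deg h(S/I(G),λ) = ∑ sᵢ + ∑ max{tⱼ,1}` and `reg S/I(G) = ∑ tⱼ + m`):
`∑ sᵢ + ∑ max{tⱼ,1} ≥ ∑ tⱼ + m`, with equality iff all `sᵢ = 1` and all `tⱼ ≥ 1`. -/
theorem cwGraph_deg_h_ge_reg (m n : ℕ) (s : Fin m → ℕ) (t : Fin n → ℕ)
    (hs : ∀ i, 1 ≤ s i) :
    (∑ j, t j) + m ≤ (∑ i, s i) + ∑ j, max (t j) 1 ∧
    ((∑ i, s i) + (∑ j, max (t j) 1) = (∑ j, t j) + m ↔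
      (∀ i, s i = 1) ∧ ∀ j, 1 ≤ t j) := by
  have hsm : m ≤ ∑ i, s i := by
    calc m = ∑ _i : Fin m, 1 := by simp
    _ ≤ ∑ i, s i := Finset.sum_le_sum fun i _ => hs i
  have htm : (∑ j, t j) ≤ ∑ j, max (t j) 1 :=
    Finset.sum_le_sum fun j _ => le_max_left _ _
  constructor
  · omega
  constructor
  · intro h
    have h1 : ∑ i, s i = m := by omega
    have h2 : ∑ j, max (t j) 1 = ∑ j, t j := by omega
    constructor
    · intro i
      by_contra hne
      have : 2 ≤ s i := by have := hs i; omega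
      have h3 := Finset.sum_lt_sum (f := fun _ : Fin m => 1) (g := s)
        (fun i _ => hs i) ⟨i, Finset.mem_univ i, by show 1 < s i; omega⟩
      simp at h3
      omega
    · intro j
      by_contra hne
      have htj : t j = 0 := by omega
      have : (∑ j, t j) + 1 ≤ ∑ j, max (t j) 1 := by
        have := Finset.sum_lt_sum (f := t) (g := fun j => max (t j) 1)
          (fun j _ => le_max_left _ _) ⟨j, Finset.mem_univ j, by simp [htj]⟩
        exact this
      omega
  · rintro ⟨h1, h2⟩
    have e1 : ∑ i, s i = m := by simp [h1]
    have e2 : ∑ j, max (t j) 1 = ∑ j, t j :=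
      Finset.sum_congr rfl fun j _ => by have := h2 j; omega
    omega
end

section
/- Given integers $d, r, e$ with $d \geq r \geq e \geq 3$, there exists a Cameron--Walker graph $G$ whose maximum independent set has size $d$, whose matching number equals $r$, and whose minimum independent dominating set has size $e$. Concretely: for $d > r$, take $m = e-1$, $n = 2$, $s_1 = \cdots = s_{e-2} = 1$, $s_{e-1} = d-r$, $t_1 = r-e+1$, $t_2 = 0$, with bipartite edges $\{v_1, w_1\}$ and $\{v_i, w_2\}$ for all $i$; for $d = r$, take $m = e-1$, $n = 1$, all $s_i = 1$, $t_1 = d-e+1$. -/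
open Finset

namespace CW
variable {m n : ℕ} {s : Fin m → ℕ} {t : Fin n → ℕ} {B : Fin m → Fin n → Prop}

abbrev vv (i : Fin m) : CWVert m n s t := Sum.inl i
abbrev wv (j : Fin n) : CWVert m n s t := Sum.inr (Sum.inl j)
abbrev xv (i : Fin m) (k : Fin (s i)) : CWVert m n s t := Sum.inr (Sum.inr (Sum.inl ⟨i, k⟩))
abbrev yv (j : Fin n) (l : Fin (t j)) (c : Fin 2) : CWVert m n s t :=
  Sum.inr (Sum.inr (Sum.inr ⟨j, l, c⟩))

def group : CWVert m n s t → Fin m ⊕ Fin n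
  | Sum.inl i => Sum.inl i
  | Sum.inr (Sum.inl j) => Sum.inr j
  | Sum.inr (Sum.inr (Sum.inl ⟨i, _⟩)) => Sum.inl i
  | Sum.inr (Sum.inr (Sum.inr ⟨j, _⟩)) => Sum.inr j

lemma indep_card_le (hs : ∀ i, 1 ≤ s i) (A : Finset (CWVert m n s t))
    (hA : ∀ a ∈ A, ∀ b ∈ A, ¬ (cwGraph m n s t B).Adj a b) :
    A.card ≤ ∑ i, s i + ∑ j, max (t j) 1 := by
  classical
  rw [Finset.card_eq_sum_card_fiberwise (f := group) (t := univ) (fun x _ => mem_univ _),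
    Fintype.sum_sum_type]
  refine add_le_add (Finset.sum_le_sum fun i _ => ?_) (Finset.sum_le_sum fun j _ => ?_)
  · -- fiber over inl i
    by_cases hv : (vv i : CWVert m n s t) ∈ A
    · have hsub : A.filter (fun a => group a = Sum.inl i) ⊆ {vv i} := by
        intro a ha
        rw [mem_filter] at ha
        obtain ⟨haA, hg⟩ := ha
        rcases a with i' | j' | ⟨i', k⟩ | ⟨j', l, c⟩ <;> simp [group] at hg ⊢
        · exact hg
        · exfalso
          subst hg
          exact hA _ hv _ haA (by simp [cwGraph, SimpleGraph.fromRel_adj, cwRel])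
      calc (A.filter (fun a => group a = Sum.inl i)).card ≤ 1 := by
            simpa using card_le_card hsub
        _ ≤ s i := hs i
    · refine le_trans (card_le_card_of_injOn
        (fun a => match a with | Sum.inr (Sum.inr (Sum.inl ⟨_, k⟩)) => (k : ℕ) | _ => 0)
        ?_ ?_) (by simp : (Finset.range (s i)).card ≤ s i)
      · intro a ha
        rw [mem_coe, mem_filter] at ha
        obtain ⟨haA, hg⟩ := ha
        rcases a with i' | j' | ⟨i', k⟩ | ⟨j', l, c⟩ <;> simp [group] at hg
        · exact absurd (hg ▸ haA) hv
        · subst hg; simpa using k.isLt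
      · intro a ha b hb hab
        simp only [coe_filter, Set.mem_setOf_eq] at ha hb
        obtain ⟨haA, hga⟩ := ha
        obtain ⟨hbA, hgb⟩ := hb
        rcases a with i' | j' | ⟨i', k⟩ | ⟨j', l, c⟩ <;> simp [group] at hga
        · exact absurd (hga ▸ haA) hv
        rcases b with i'' | j'' | ⟨i'', k'⟩ | ⟨j'', l', c'⟩ <;> simp [group] at hgb
        · exact absurd (hgb ▸ hbA) hv
        subst hga; subst hgb
        simp only at hab
        simp [Fin.ext_iff, hab]
  · -- fiber over inr j
    by_cases hw : (wv j : CWVert m n s t) ∈ A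
    · have hsub : A.filter (fun a => group a = Sum.inr j) ⊆ {wv j} := by
        intro a ha
        rw [mem_filter] at ha
        obtain ⟨haA, hg⟩ := ha
        rcases a with i' | j' | ⟨i', k⟩ | ⟨j', l, c⟩ <;> simp [group] at hg ⊢
        · exact hg
        · exfalso
          subst hg
          exact hA _ hw _ haA (by simp [cwGraph, SimpleGraph.fromRel_adj, cwRel])
      calc (A.filter (fun a => group a = Sum.inr j)).card ≤ 1 := by
            simpa using card_le_card hsub
        _ ≤ max (t j) 1 := le_max_right _ _
    · refine le_trans (card_le_card_of_injOn
        (fun a => match a with | Sum.inr (Sum.inr (Sum.inr ⟨_, l, _⟩)) => (l : ℕ) | _ => 0)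
        ?_ ?_) (le_trans (by simp : (Finset.range (t j)).card ≤ t j) (le_max_left _ _))
      · intro a ha
        rw [mem_coe, mem_filter] at ha
        obtain ⟨haA, hg⟩ := ha
        rcases a with i' | j' | ⟨i', k⟩ | ⟨j', l, c⟩ <;> simp [group] at hg
        · exact absurd (hg ▸ haA) hw
        · subst hg; simpa using l.isLt
      · intro a ha b hb hab
        simp only [coe_filter, Set.mem_setOf_eq] at ha hb
        obtain ⟨haA, hga⟩ := ha
        obtain ⟨hbA, hgb⟩ := hb
        rcases a with i' | j' | ⟨i', k⟩ | ⟨j', l, c⟩ <;> simp [group] at hga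
        · exact absurd (hga ▸ haA) hw
        rcases b with i'' | j'' | ⟨i'', k'⟩ | ⟨j'', l', c'⟩ <;> simp [group] at hgb
        · exact absurd (hgb ▸ hbA) hw
        subst hga; subst hgb
        simp only at hab
        by_cases hcc : c = c'
        · subst hcc
          simp [Fin.ext_iff, hab]
        · refine absurd ?_ (hA _ haA _ hbA)
          rw [cwGraph, SimpleGraph.fromRel_adj]
          refine ⟨?_, Or.inl (by simp [cwRel, hab])⟩
          intro h
          apply hcc
          simp only [Sum.inr.injEq, Sigma.mk.inj_iff, heq_eq_eq, Prod.mk.injEq] at h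
          exact h.2.2

end CW
section IndepLow
open CW
variable {m n : ℕ} {s : Fin m → ℕ} {t : Fin n → ℕ} {B : Fin m → Fin n → Prop}

open Classical in
noncomputable def A0 (m n : ℕ) (s : Fin m → ℕ) (t : Fin n → ℕ) : Finset (CWVert m n s t) :=
  ((univ : Finset (Σ i : Fin m, Fin (s i))).image (fun p => xv p.1 p.2))
  ∪ ((univ.filter (fun j => t j = 0)).image (fun j => wv j))
  ∪ ((univ : Finset (Σ j : Fin n, Fin (t j))).image (fun p => yv p.1 p.2 0))

lemma mem_A0 {a : CWVert m n s t} : a ∈ A0 m n s t ↔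
    (∃ i k, a = xv i k) ∨ (∃ j, t j = 0 ∧ a = wv j) ∨ (∃ j l, a = yv j l 0) := by
  classical
  simp only [A0, mem_union, mem_image, mem_filter, mem_univ, true_and, Sigma.exists]
  constructor
  · rintro ((⟨i, k, rfl⟩ | ⟨j, hj, rfl⟩) | ⟨j, l, rfl⟩)
    · exact Or.inl ⟨i, k, rfl⟩
    · exact Or.inr (Or.inl ⟨j, hj, rfl⟩)
    · exact Or.inr (Or.inr ⟨j, l, rfl⟩)
  · rintro (⟨i, k, rfl⟩ | ⟨j, hj, rfl⟩ | ⟨j, l, rfl⟩)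
    · exact Or.inl (Or.inl ⟨i, k, rfl⟩)
    · exact Or.inl (Or.inr ⟨j, hj, rfl⟩)
    · exact Or.inr ⟨j, l, rfl⟩

lemma A0_card : (A0 m n s t).card = ∑ i, s i + (∑ j, t j + (univ.filter (fun j => t j = 0)).card) := by
  classical
  have hc1 : (((univ : Finset (Σ i : Fin m, Fin (s i))).image
      (fun p => (xv p.1 p.2 : CWVert m n s t)))).card = ∑ i, s i := by
    rw [Finset.card_image_of_injective _ (fun p q h => by
      rcases p with ⟨i, k⟩; rcases q with ⟨i', k'⟩; simpa using h)]
    simp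
  have hc2 : ((univ.filter (fun j => t j = 0)).image (fun j => (wv j : CWVert m n s t))).card
      = (univ.filter (fun j => t j = 0)).card :=
    Finset.card_image_of_injective _ (fun p q h => by simpa using h)
  have hc3 : (((univ : Finset (Σ j : Fin n, Fin (t j))).image
      (fun p => (yv p.1 p.2 0 : CWVert m n s t)))).card = ∑ j, t j := by
    rw [Finset.card_image_of_injective _ (fun p q h => by
      rcases p with ⟨j, l⟩; rcases q with ⟨j', l'⟩
      simp only [Sum.inr.injEq, Sigma.mk.inj_iff] at h
      obtain ⟨rfl, h2⟩ := h
      simpa using h2)]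
    simp
  have hd1 : Disjoint ((univ : Finset (Σ i : Fin m, Fin (s i))).image
      (fun p => (xv p.1 p.2 : CWVert m n s t)))
      ((univ.filter (fun j => t j = 0)).image (fun j => (wv j : CWVert m n s t))) := by
    rw [Finset.disjoint_left]
    rintro a ha hb
    simp only [mem_image, mem_filter, mem_univ, true_and, Sigma.exists] at ha hb
    obtain ⟨i, k, rfl⟩ := ha
    obtain ⟨j, hj, h⟩ := hb
    simp at h
  have hd2 : Disjoint (((univ : Finset (Σ i : Fin m, Fin (s i))).image
      (fun p => (xv p.1 p.2 : CWVert m n s t)))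
      ∪ ((univ.filter (fun j => t j = 0)).image (fun j => (wv j : CWVert m n s t))))
      (((univ : Finset (Σ j : Fin n, Fin (t j))).image
      (fun p => (yv p.1 p.2 0 : CWVert m n s t)))) := by
    rw [Finset.disjoint_left]
    rintro a ha hb
    simp only [mem_union, mem_image, mem_filter, mem_univ, true_and, Sigma.exists] at ha hb
    obtain ⟨j, l, rfl⟩ := hb
    rcases ha with ⟨i, k, h⟩ | ⟨j', hj', h⟩ <;> simp at h
  rw [A0, card_union_of_disjoint hd2, card_union_of_disjoint hd1, hc1, hc2, hc3]
  ring

lemma A0_indep : ∀ a ∈ A0 m n s t, ∀ b ∈ A0 m n s t, ¬ (cwGraph m n s t B).Adj a b := by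
  intro a ha b hb hadj
  rw [mem_A0] at ha hb
  rw [cwGraph, SimpleGraph.fromRel_adj] at hadj
  obtain ⟨hne, hrel⟩ := hadj
  rcases ha with ⟨i, k, rfl⟩ | ⟨j, hj, rfl⟩ | ⟨j, l, rfl⟩ <;>
    rcases hb with ⟨i', k', rfl⟩ | ⟨j', hj', rfl⟩ | ⟨j', l', rfl⟩
  · simp [cwRel] at hrel
  · simp [cwRel] at hrel
  · simp [cwRel] at hrel
  · simp [cwRel] at hrel
  · simp [cwRel] at hrel
  · -- w j (t j = 0) vs y j' l' 0
    have h : j = j' := by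
      rcases hrel with h | h
      · exact h
      · exact absurd h (by simp [cwRel])
    subst h
    exact absurd l'.isLt (by omega)
  · simp [cwRel] at hrel
  · have h : j' = j := by
      rcases hrel with h | h
      · exact absurd h (by simp [cwRel])
      · exact h
    subst h
    exact absurd l.isLt (by omega)
  · -- y j l 0 vs y j' l' 0
    have hll : j = j' ∧ (l : ℕ) = (l' : ℕ) := by
      rcases hrel with h | h
      · exact h
      · exact ⟨h.1.symm, h.2.symm⟩
    obtain ⟨rfl, hl⟩ := hll
    exact hne (by simp [Fin.ext_iff, hl])

lemma indepNumber_cw (hs : ∀ i, 1 ≤ s i) :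
    indepNumber (cwGraph m n s t B) = ∑ i, s i + ∑ j, max (t j) 1 := by
  classical
  have hmax : ∑ j, max (t j) 1 = ∑ j, t j + (univ.filter (fun j => t j = 0)).card := by
    have : ∀ j ∈ univ, max (t j) 1 = t j + (if t j = 0 then 1 else 0) := by
      intro j _
      rcases Nat.eq_zero_or_pos (t j) with h | h
      · simp [h]
      · rw [if_neg (Nat.pos_iff_ne_zero.mp h)]
        omega
    rw [Finset.sum_congr rfl this, Finset.sum_add_distrib]
    congr 1
    simp [Finset.sum_boole]
  have hmem : (∑ i, s i + ∑ j, max (t j) 1) ∈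
      {k | ∃ A : Finset (CWVert m n s t), (∀ a ∈ A, ∀ b ∈ A, ¬ (cwGraph m n s t B).Adj a b) ∧ A.card = k} :=
    ⟨A0 m n s t, A0_indep, by rw [A0_card, hmax]⟩
  apply le_antisymm
  · apply csSup_le ⟨_, hmem⟩
    rintro b ⟨A, hA, rfl⟩
    exact CW.indep_card_le hs A hA
  · exact le_csSup ⟨_, fun b hb => by
      obtain ⟨A, hA, rfl⟩ := hb
      exact CW.indep_card_le hs A hA⟩ hmem
end IndepLow

section Matching
open CW
variable {m n : ℕ} {s : Fin m → ℕ} {t : Fin n → ℕ} {B : Fin m → Fin n → Prop}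

noncomputable def M0 (m n : ℕ) (s : Fin m → ℕ) (t : Fin n → ℕ) (hs : ∀ i, 1 ≤ s i) :
    Finset (Sym2 (CWVert m n s t)) := by
  classical
  exact ((univ : Finset (Fin m)).image (fun i => s(vv i, xv i ⟨0, hs i⟩)))
    ∪ ((univ : Finset (Σ j : Fin n, Fin (t j))).image (fun p => s(yv p.1 p.2 0, yv p.1 p.2 1)))


lemma yv_inj {j j' : Fin n} {l : Fin (t j)} {l' : Fin (t j')} {c c' : Fin 2}
    (h : (yv j l c : CWVert m n s t) = yv j' l' c') :
    j = j' ∧ (l : ℕ) = (l' : ℕ) ∧ c = c' := by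
  simp only [Sum.inr.injEq, Sigma.mk.inj_iff] at h
  obtain ⟨rfl, h2⟩ := h
  simp only [heq_eq_eq, Prod.mk.injEq] at h2
  exact ⟨rfl, congrArg Fin.val h2.1, h2.2⟩

lemma xv_inj {i i' : Fin m} {k : Fin (s i)} {k' : Fin (s i')}
    (h : (xv i k : CWVert m n s t) = xv i' k') : i = i' ∧ (k : ℕ) = (k' : ℕ) := by
  simp only [Sum.inr.injEq, Sum.inl.injEq, Sigma.mk.inj_iff] at h
  obtain ⟨rfl, h2⟩ := h
  exact ⟨rfl, congrArg Fin.val (eq_of_heq h2)⟩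

lemma mem_M0 {hs : ∀ i, 1 ≤ s i} {e : Sym2 (CWVert m n s t)} : e ∈ M0 m n s t hs ↔
    (∃ i, e = s(vv i, xv i ⟨0, hs i⟩)) ∨ (∃ j l, e = s(yv j l 0, yv j l 1)) := by
  classical
  simp only [M0, mem_union, mem_image, mem_univ, true_and, Sigma.exists]
  constructor
  · rintro (⟨i, rfl⟩ | ⟨j, l, rfl⟩)
    · exact Or.inl ⟨i, rfl⟩
    · exact Or.inr ⟨j, l, rfl⟩
  · rintro (⟨i, rfl⟩ | ⟨j, l, rfl⟩)
    · exact Or.inl ⟨i, rfl⟩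
    · exact Or.inr ⟨j, l, rfl⟩

lemma M0_edges {hs : ∀ i, 1 ≤ s i} : ∀ e ∈ M0 m n s t hs, e ∈ (cwGraph m n s t B).edgeSet := by
  intro e he
  rw [mem_M0] at he
  rcases he with ⟨i, rfl⟩ | ⟨j, l, rfl⟩ <;>
    simp [SimpleGraph.mem_edgeSet, cwGraph, SimpleGraph.fromRel_adj, cwRel, Fin.ext_iff]

lemma M0_disj {hs : ∀ i, 1 ≤ s i} : ∀ e ∈ M0 m n s t hs, ∀ e' ∈ M0 m n s t hs, e ≠ e' →
    ∀ v, v ∈ e → v ∉ e' := by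
  intro e he e' he' hne v hv hv'
  rw [mem_M0] at he he'
  apply hne
  rcases he with ⟨i, rfl⟩ | ⟨j, l, rfl⟩ <;> rcases he' with ⟨i', rfl⟩ | ⟨j', l', rfl⟩ <;>
    rw [Sym2.mem_iff] at hv hv'
  · have hii : i = i' := by
      rcases hv with rfl | rfl <;> rcases hv' with h | h
      · simpa using h
      · exact absurd h (by simp)
      · exact absurd h (by simp)
      · exact (xv_inj h).1
    subst hii
    rfl
  · exfalso; rcases hv with rfl | rfl <;> rcases hv' with h | h <;> simp at h
  · exfalso; rcases hv with rfl | rfl <;> rcases hv' with h | h <;> simp at h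
  · rcases hv with rfl | rfl
    · rcases hv' with h | h
      · obtain ⟨rfl, h2, -⟩ := yv_inj h
        rw [show l = l' from Fin.ext h2]
      · obtain ⟨-, -, h3⟩ := yv_inj h
        exact absurd h3 (by decide)
    · rcases hv' with h | h
      · obtain ⟨-, -, h3⟩ := yv_inj h
        exact absurd h3 (by decide)
      · obtain ⟨rfl, h2, -⟩ := yv_inj h
        rw [show l = l' from Fin.ext h2]

lemma M0_card {hs : ∀ i, 1 ≤ s i} : (M0 m n s t hs).card = m + ∑ j, t j := by
  classical
  rw [M0, card_union_of_disjoint]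
  · congr 1
    · rw [Finset.card_image_of_injective _ (fun p q h => by
        simp only [Sym2.eq, Sym2.rel_iff', Prod.mk.injEq, Prod.swap_prod_mk] at h
        rcases h with ⟨h, -⟩ | ⟨h, -⟩ <;> simpa using h)]
      simp
    · rw [Finset.card_image_of_injective _ (fun p q h => by
        rcases p with ⟨j, l⟩; rcases q with ⟨j', l'⟩
        simp only [Sym2.eq, Sym2.rel_iff', Prod.mk.injEq, Prod.swap_prod_mk] at h
        rcases h with ⟨h, -⟩ | ⟨h, -⟩
        · obtain ⟨rfl, h2, -⟩ := yv_inj h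
          rw [show l = l' from Fin.ext h2]
        · obtain ⟨-, -, h3⟩ := yv_inj h
          exact absurd h3 (by decide))]
      simp
  · rw [Finset.disjoint_left]
    rintro e he hb
    simp only [mem_image, mem_univ, true_and, Sigma.exists] at he hb
    obtain ⟨i, rfl⟩ := he
    obtain ⟨j, l, h⟩ := hb
    simp only [Sym2.eq, Sym2.rel_iff', Prod.mk.injEq, Prod.swap_prod_mk] at h
    rcases h with ⟨h, -⟩ | ⟨h, -⟩ <;> simp at h

end Matching

section MatchUp
open CW
variable {m n : ℕ} {s : Fin m → ℕ} {t : Fin n → ℕ} {B : Fin m → Fin n → Prop}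

lemma edge_rep (e : Sym2 (CWVert m n s t)) (he : e ∈ (cwGraph m n s t B).edgeSet) :
    (∃ i : Fin m, (vv i : CWVert m n s t) ∈ e) ∨
    (∃ p : Σ j : Fin n, Fin (t j) × Fin 2,
      (Sum.inr (Sum.inr (Sum.inr p)) : CWVert m n s t) ∈ e) := by
  induction e using Sym2.ind with
  | _ a b =>
    rw [SimpleGraph.mem_edgeSet, cwGraph, SimpleGraph.fromRel_adj] at he
    obtain ⟨hne, hrel⟩ := he
    rcases a with i | j | ⟨i, k⟩ | ⟨j, l, c⟩ <;> rcases b with i' | j' | ⟨i', k'⟩ | ⟨j', l', c'⟩ <;>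
      first
        | exact Or.inl ⟨_, Sym2.mem_mk_left _ _⟩
        | exact Or.inl ⟨_, Sym2.mem_mk_right _ _⟩
        | exact Or.inr ⟨_, Sym2.mem_mk_left _ _⟩
        | exact Or.inr ⟨_, Sym2.mem_mk_right _ _⟩
        | (exfalso; rcases hrel with h | h <;> simp [cwRel] at h)

lemma edge_with_y {j : Fin n} {l : Fin (t j)} {c : Fin 2} (e : Sym2 (CWVert m n s t))
    (he : e ∈ (cwGraph m n s t B).edgeSet) (hy : (yv j l c : CWVert m n s t) ∈ e) :
    (wv j : CWVert m n s t) ∈ e ∨ ∃ c', c' ≠ c ∧ (yv j l c' : CWVert m n s t) ∈ e := by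
  induction e using Sym2.ind with
  | _ a b =>
    rw [SimpleGraph.mem_edgeSet, cwGraph, SimpleGraph.fromRel_adj] at he
    obtain ⟨hne, hrel⟩ := he
    rw [Sym2.mem_iff] at hy
    rcases hy with hy | hy
    · subst hy
      rcases b with i' | j' | ⟨i', k'⟩ | ⟨j', l', c'⟩
      · exfalso; rcases hrel with h | h <;> simp [cwRel] at h
      · have hj : j' = j := by
          rcases hrel with h | h
          · exact absurd h (by simp [cwRel])
          · exact h
        subst hj
        exact Or.inl (by simp)
      · exfalso; rcases hrel with h | h <;> simp [cwRel] at h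
      · have hj : j = j' ∧ (l : ℕ) = (l' : ℕ) := by
          rcases hrel with h | h
          · exact h
          · exact ⟨h.1.symm, h.2.symm⟩
        obtain ⟨hj1, hj2⟩ := hj
        subst hj1
        have hl : l' = l := Fin.ext hj2.symm
        subst hl
        refine Or.inr ⟨c', fun hcc => hne (by simp [hcc]), by simp⟩
    · subst hy
      rcases a with i' | j' | ⟨i', k'⟩ | ⟨j', l', c'⟩
      · exfalso; rcases hrel with h | h <;> simp [cwRel] at h
      · have hj : j' = j := by
          rcases hrel with h | h
          · exact h
          · exact absurd h (by simp [cwRel])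
        subst hj
        exact Or.inl (by simp)
      · exfalso; rcases hrel with h | h <;> simp [cwRel] at h
      · have hj : j' = j ∧ (l' : ℕ) = (l : ℕ) := by
          rcases hrel with h | h
          · exact h
          · exact ⟨h.1.symm, h.2.symm⟩
        obtain ⟨hj1, hj2⟩ := hj
        subst hj1
        have hl : l' = l := Fin.ext hj2
        subst hl
        refine Or.inr ⟨c', fun hcc => hne (by simp [hcc]), by simp⟩

lemma matching_card_le (hm : 0 < m) (M : Finset (Sym2 (CWVert m n s t)))
    (hedges : ∀ e ∈ M, e ∈ (cwGraph m n s t B).edgeSet)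
    (hdisj : ∀ e ∈ M, ∀ e' ∈ M, e ≠ e' → ∀ v, v ∈ e → v ∉ e') :
    M.card ≤ m + ∑ j, t j := by
  classical
  set TS : Finset (ℕ ⊕ ℕ × ℕ) :=
    ((Finset.range m).image Sum.inl)
    ∪ ((univ : Finset (Σ j : Fin n, Fin (t j))).image
        (fun p => Sum.inr ((p.1 : ℕ), (p.2 : ℕ)))) with hTS
  have hTScard : TS.card = m + ∑ j, t j := by
    rw [hTS, card_union_of_disjoint]
    · congr 1
      · rw [Finset.card_image_of_injective _ (fun p q h => by simpa using h)]
        simp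
      · rw [Finset.card_image_of_injective _ (fun p q h => by
          rcases p with ⟨j, l⟩; rcases q with ⟨j', l'⟩
          simp only [Sum.inr.injEq, Prod.mk.injEq] at h
          obtain ⟨h1, h2⟩ := h
          have : j = j' := Fin.ext h1
          subst this
          simp [Fin.ext_iff, h2])]
        simp
    · rw [Finset.disjoint_left]
      rintro a ha hb
      simp only [mem_image, mem_range, mem_univ, true_and, Sigma.exists] at ha hb
      obtain ⟨i, hi, rfl⟩ := ha
      obtain ⟨j, l, h⟩ := hb
      simp at h
  rw [← hTScard]
  apply card_le_card_of_injOn (fun e =>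
    if h1 : ∃ i : Fin m, (vv i : CWVert m n s t) ∈ e then Sum.inl (h1.choose : Fin m).val
    else if h2 : ∃ p : (Σ j : Fin n, Fin (t j) × Fin 2),
        (Sum.inr (Sum.inr (Sum.inr p)) : CWVert m n s t) ∈ e then
      Sum.inr ((h2.choose.1 : ℕ), (h2.choose.2.1 : ℕ))
    else Sum.inl 0)
  · intro e he
    by_cases h1 : ∃ i : Fin m, (vv i : CWVert m n s t) ∈ e
    · simp only [mem_coe]; rw [dif_pos h1, hTS]
      exact mem_union_left _ (mem_image.2 ⟨_, mem_range.2 (h1.choose).isLt, rfl⟩)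
    · have h2 := (edge_rep e (hedges e he)).resolve_left h1
      simp only [mem_coe]; rw [dif_neg h1, dif_pos h2, hTS]
      exact mem_union_right _ (mem_image.2 ⟨⟨h2.choose.1, h2.choose.2.1⟩, mem_univ _, rfl⟩)
  · intro e he e' he' hf
    simp only [mem_coe] at he he'
    dsimp only at hf
    by_contra hne
    by_cases h1 : ∃ i : Fin m, (vv i : CWVert m n s t) ∈ e <;>
      by_cases h1' : ∃ i : Fin m, (vv i : CWVert m n s t) ∈ e'
    · rw [dif_pos h1, dif_pos h1'] at hf
      simp only [Sum.inl.injEq] at hf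
      have hii : h1.choose = h1'.choose := Fin.ext hf
      exact hdisj e he e' he' hne _ h1.choose_spec (hii ▸ h1'.choose_spec)
    · have h2' := (edge_rep e' (hedges e' he')).resolve_left h1'
      rw [dif_pos h1, dif_neg h1', dif_pos h2'] at hf
      simp at hf
    · have h2 := (edge_rep e (hedges e he)).resolve_left h1
      rw [dif_neg h1, dif_pos h2, dif_pos h1'] at hf
      simp at hf
    · have h2 := (edge_rep e (hedges e he)).resolve_left h1
      have h2' := (edge_rep e' (hedges e' he')).resolve_left h1'
      rw [dif_neg h1, dif_pos h2, dif_neg h1', dif_pos h2'] at hf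
      simp only [Sum.inr.injEq, Prod.mk.injEq] at hf
      obtain ⟨hjv, hlv⟩ := hf
      have hpe : (yv h2.choose.1 h2.choose.2.1 h2.choose.2.2 : CWVert m n s t) ∈ e :=
        h2.choose_spec
      have hpe' : (yv h2'.choose.1 h2'.choose.2.1 h2'.choose.2.2 : CWVert m n s t) ∈ e' :=
        h2'.choose_spec
      generalize hg : h2.choose = p at hpe hjv hlv
      generalize hg' : h2'.choose = p' at hpe' hjv hlv
      obtain ⟨j₁, l₁, c₁⟩ := p
      obtain ⟨j₂, l₂, c₂⟩ := p'
      simp only at hpe hpe' hjv hlv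
      have hj : j₁ = j₂ := Fin.ext hjv
      subst hj
      have hl : l₁ = l₂ := Fin.ext hlv
      subst hl
      -- now both edges contain a y-vertex of the same triangle pair (j₁, l₁)
      by_cases hcc : c₁ = c₂
      · subst hcc
        exact hdisj e he e' he' hne _ hpe hpe'
      · rcases edge_with_y e (hedges e he) hpe with hw | ⟨c₃, hc₃, hy₃⟩
        · rcases edge_with_y e' (hedges e' he') hpe' with hw' | ⟨c₄, hc₄, hy₄⟩
          · exact hdisj e he e' he' hne _ hw hw'
          · have : c₄ = c₁ := by
              have h1 := c₁.isLt; have h2 := c₂.isLt; have h3 := c₄.isLt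
              have := Fin.val_ne_of_ne hc₄
              have := Fin.val_ne_of_ne hcc
              exact Fin.ext (by omega)
            subst this
            exact hdisj e he e' he' hne _ hpe hy₄
        · have : c₃ = c₂ := by
            have h1 := c₁.isLt; have h2 := c₂.isLt; have h3 := c₃.isLt
            have := Fin.val_ne_of_ne hc₃
            have := Fin.val_ne_of_ne hcc
            exact Fin.ext (by omega)
          subst this
          exact hdisj e he e' he' hne _ hy₃ hpe'

lemma matchingNumber_cw (hm : 0 < m) (hs : ∀ i, 1 ≤ s i) :
    matchingNumber (cwGraph m n s t B) = m + ∑ j, t j := by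
  classical
  have hmem : (m + ∑ j, t j) ∈ {k | ∃ M : Finset (Sym2 (CWVert m n s t)),
      (∀ e ∈ M, e ∈ (cwGraph m n s t B).edgeSet) ∧
      (∀ e ∈ M, ∀ e' ∈ M, e ≠ e' → ∀ v, v ∈ e → v ∉ e') ∧ M.card = k} :=
    ⟨M0 m n s t hs, M0_edges, M0_disj, M0_card⟩
  apply le_antisymm
  · apply csSup_le ⟨_, hmem⟩
    rintro b ⟨M, hE, hD, rfl⟩
    exact matching_card_le hm M hE hD
  · exact le_csSup ⟨_, fun b hb => by
      obtain ⟨M, hE, hD, rfl⟩ := hb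
      exact matching_card_le hm M hE hD⟩ hmem

end MatchUp

section IDS
open CW
variable {m n : ℕ} {s : Fin m → ℕ} {t : Fin n → ℕ} {B : Fin m → Fin n → Prop}

lemma adj_leaf {a : CWVert m n s t} {i : Fin m} {k : Fin (s i)}
    (h : (cwGraph m n s t B).Adj a (xv i k)) : a = vv i := by
  rw [cwGraph, SimpleGraph.fromRel_adj] at h
  obtain ⟨-, hrel⟩ := h
  rcases a with i' | j' | ⟨i', k'⟩ | ⟨j', l', c'⟩
  · have : i' = i := by
      rcases hrel with h | h
      · exact h
      · exact absurd h (by simp [cwRel])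
    simp [this]
  · exfalso; rcases hrel with h | h <;> simp [cwRel] at h
  · exfalso; rcases hrel with h | h <;> simp [cwRel] at h
  · exfalso; rcases hrel with h | h <;> simp [cwRel] at h

lemma adj_y {a : CWVert m n s t} {j : Fin n} {l : Fin (t j)} {c : Fin 2}
    (h : (cwGraph m n s t B).Adj a (yv j l c)) :
    a = wv j ∨ ∃ c', a = yv j l c' := by
  rw [cwGraph, SimpleGraph.fromRel_adj] at h
  obtain ⟨-, hrel⟩ := h
  rcases a with i' | j' | ⟨i', k'⟩ | ⟨j', l', c'⟩
  · exfalso; rcases hrel with h | h <;> simp [cwRel] at h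
  · have : j' = j := by
      rcases hrel with h | h
      · exact h
      · exact absurd h (by simp [cwRel])
    subst this
    exact Or.inl rfl
  · exfalso; rcases hrel with h | h <;> simp [cwRel] at h
  · have hj : j' = j ∧ (l' : ℕ) = (l : ℕ) := by
      rcases hrel with h | h
      · exact h
      · exact ⟨h.1.symm, h.2.symm⟩
    obtain ⟨rfl, h2⟩ := hj
    have : l' = l := Fin.ext h2
    subst this
    exact Or.inr ⟨c', rfl⟩

lemma forced_v {A : Finset (CWVert m n s t)}
    (hdom : ∀ v, v ∈ A ∨ ∃ a ∈ A, (cwGraph m n s t B).Adj a v)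
    (i : Fin m) (k : Fin (s i)) : (vv i : CWVert m n s t) ∈ A ∨ (xv i k : CWVert m n s t) ∈ A := by
  rcases hdom (xv i k) with h | ⟨a, ha, hadj⟩
  · exact Or.inr h
  · rw [adj_leaf hadj] at ha
    exact Or.inl ha

lemma forced_y {A : Finset (CWVert m n s t)}
    (hdom : ∀ v, v ∈ A ∨ ∃ a ∈ A, (cwGraph m n s t B).Adj a v)
    {j : Fin n} (hw : (wv j : CWVert m n s t) ∉ A) (l : Fin (t j)) :
    (yv j l 0 : CWVert m n s t) ∈ A ∨ (yv j l 1 : CWVert m n s t) ∈ A := by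
  rcases hdom (yv j l 0) with h | ⟨a, ha, hadj⟩
  · exact Or.inl h
  · rcases adj_y hadj with rfl | ⟨c', rfl⟩
    · exact absurd ha hw
    · rcases c' with ⟨cv, hcv⟩
      interval_cases cv
      · exact Or.inl ha
      · exact Or.inr ha

lemma card_le_of_inj {ι : Type} [Fintype ι] {A : Finset (CWVert m n s t)}
    (g : ι → CWVert m n s t) (hg : ∀ x, g x ∈ A) (hinj : Function.Injective g) :
    Fintype.card ι ≤ A.card := by
  rw [← Finset.card_univ]
  exact card_le_card_of_injOn g (fun x _ => hg x) hinj.injOn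

end IDS

section C1
open CW

def rdr {m n : ℕ} {s : Fin m → ℕ} {t : Fin n → ℕ} : CWVert m n s t → ℕ ⊕ ℕ ⊕ ℕ
  | Sum.inl i => Sum.inl i.val
  | Sum.inr (Sum.inl j) => Sum.inr (Sum.inl j.val)
  | Sum.inr (Sum.inr (Sum.inl p)) => Sum.inl p.1.val
  | Sum.inr (Sum.inr (Sum.inr p)) => Sum.inr (Sum.inr p.2.1.val)

open Classical in
noncomputable def A1 (d e : ℕ) : Finset (CWVert (e-1) 1 (fun _ => 1) (fun _ => d-e+1)) :=
  {wv 0} ∪ ((univ : Finset (Fin (e-1))).image (fun i => xv i 0))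

lemma mem_A1 {d e : ℕ} {a : CWVert (e-1) 1 (fun _ => 1) (fun _ => d-e+1)} :
    a ∈ A1 d e ↔ a = wv 0 ∨ ∃ i, a = xv i 0 := by
  classical
  simp only [A1, mem_union, mem_singleton, mem_image, mem_univ, true_and]
  constructor
  · rintro (rfl | ⟨i, rfl⟩)
    · exact Or.inl rfl
    · exact Or.inr ⟨i, rfl⟩
  · rintro (rfl | ⟨i, rfl⟩)
    · exact Or.inl rfl
    · exact Or.inr ⟨i, rfl⟩

lemma A1_card {d e : ℕ} (he : 3 ≤ e) : (A1 d e).card = e := by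
  classical
  rw [A1, card_union_of_disjoint (by
    rw [Finset.disjoint_left]
    rintro a ha hb
    simp only [mem_singleton] at ha
    subst ha
    simp at hb)]
  rw [Finset.card_image_of_injective _ (fun p q h => by simpa using h)]
  simp
  omega

lemma ids1 (d e : ℕ) (he : 3 ≤ e) (hed : e ≤ d) :
    indepDomNumber (cwGraph (e-1) 1 (fun _ => 1) (fun _ => d-e+1) (fun _ _ => True)) = e := by
  classical
  set G := cwGraph (e-1) 1 (fun _ => 1) (fun _ => d-e+1) (fun _ _ => True) with hG
  have hindep : ∀ a ∈ A1 d e, ∀ b ∈ A1 d e, ¬ G.Adj a b := by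
    intro a ha b hb hadj
    rw [mem_A1] at ha hb
    rcases ha with rfl | ⟨i, rfl⟩ <;> rcases hb with rfl | ⟨i', rfl⟩
    · exact hadj.ne rfl
    · rw [hG, cwGraph, SimpleGraph.fromRel_adj] at hadj
      rcases hadj.2 with h | h <;> simp [cwRel] at h
    · rw [hG, cwGraph, SimpleGraph.fromRel_adj] at hadj
      rcases hadj.2 with h | h <;> simp [cwRel] at h
    · rw [hG, cwGraph, SimpleGraph.fromRel_adj] at hadj
      rcases hadj.2 with h | h <;> simp [cwRel] at h
  have hdom : ∀ v, v ∈ A1 d e ∨ ∃ a ∈ A1 d e, G.Adj a v := by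
    intro v
    rcases v with i | j | ⟨i, k⟩ | ⟨j, l, c⟩
    · refine Or.inr ⟨wv 0, mem_A1.mpr (Or.inl rfl), ?_⟩
      rw [hG, cwGraph, SimpleGraph.fromRel_adj]
      exact ⟨by simp, Or.inr trivial⟩
    · exact Or.inl (mem_A1.mpr (Or.inl (by rw [Subsingleton.elim j 0])))
    · exact Or.inl (mem_A1.mpr (Or.inr ⟨i, by rw [Subsingleton.elim k 0]⟩))
    · refine Or.inr ⟨wv 0, mem_A1.mpr (Or.inl rfl), ?_⟩
      rw [hG, cwGraph, SimpleGraph.fromRel_adj]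
      refine ⟨by simp, Or.inl ?_⟩
      show (0 : Fin 1) = j
      exact Subsingleton.elim _ _
  have hmem : e ∈ {k | ∃ A : Finset (CWVert (e-1) 1 (fun _ => 1) (fun _ => d-e+1)),
      ((∀ a ∈ A, ∀ b ∈ A, ¬ G.Adj a b) ∧ (∀ v, v ∈ A ∨ ∃ a ∈ A, G.Adj a v)) ∧ A.card = k} :=
    ⟨A1 d e, ⟨hindep, hdom⟩, A1_card he⟩
  refine le_antisymm (Nat.sInf_le hmem) (le_csInf ⟨_, hmem⟩ ?_)
  rintro k ⟨A, ⟨hind, hdomA⟩, rfl⟩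
  by_cases hw : (wv 0 : CWVert (e-1) 1 (fun _ => 1) (fun _ => d-e+1)) ∈ A
  · have hx : ∀ i, (xv i 0 : CWVert (e-1) 1 (fun _ => 1) (fun _ => d-e+1)) ∈ A := by
      intro i
      refine (forced_v hdomA i 0).resolve_left (fun hv => hind _ hv _ hw ?_)
      rw [hG, cwGraph, SimpleGraph.fromRel_adj]
      exact ⟨by simp, Or.inl trivial⟩
    have hcard := card_le_of_inj (A := A)
      (Sum.elim (fun _ : Fin 1 => (wv 0 : CWVert (e-1) 1 (fun _ => 1) (fun _ => d-e+1)))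
        (fun i => xv i 0))
      (by rintro (z | i)
          · exact hw
          · exact hx i)
      (by intro x y hxy
          have h2 := congrArg rdr hxy
          rcases x with z | i <;> rcases y with z' | i' <;>
            simp only [Sum.elim_inl, Sum.elim_inr, rdr] at h2 <;>
            first
              | exact congrArg Sum.inl (Subsingleton.elim _ _)
              | exact congrArg Sum.inr (Fin.ext (Sum.inl_injective h2))
              | simp at h2)
    simp only [Fintype.card_sum, Fintype.card_fin] at hcard
    omega
  · have hvx : ∀ i, (vv i : CWVert (e-1) 1 (fun _ => 1) (fun _ => d-e+1)) ∈ A ∨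
        (xv i 0 : CWVert (e-1) 1 (fun _ => 1) (fun _ => d-e+1)) ∈ A := fun i => forced_v hdomA i 0
    have hy : ∀ l : Fin (d-e+1), (yv 0 l 0 : CWVert (e-1) 1 (fun _ => 1) (fun _ => d-e+1)) ∈ A ∨
        (yv 0 l 1 : CWVert (e-1) 1 (fun _ => 1) (fun _ => d-e+1)) ∈ A := fun l => forced_y hdomA hw l
    have hcard := card_le_of_inj (A := A)
      (Sum.elim
        (fun i : Fin (e-1) => if vv i ∈ A then (vv i : CWVert (e-1) 1 (fun _ => 1) (fun _ => d-e+1)) else xv i 0)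
        (fun l : Fin (d-e+1) => if yv 0 l 0 ∈ A then (yv 0 l 0 : CWVert (e-1) 1 (fun _ => 1) (fun _ => d-e+1)) else yv 0 l 1))
      (by rintro (i | l)
          · simp only [Sum.elim_inl]
            split_ifs with h
            · exact h
            · exact (hvx i).resolve_left h
          · simp only [Sum.elim_inr]
            split_ifs with h
            · exact h
            · exact (hy l).resolve_left h)
      (by intro x y hxy
          have h2 := congrArg rdr hxy
          rcases x with i | l <;> rcases y with i' | l' <;>
            simp only [Sum.elim_inl, Sum.elim_inr] at h2 <;>
            split_ifs at h2 <;> simp only [rdr] at h2 <;>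
            first
              | exact congrArg Sum.inl (Fin.ext (Sum.inl_injective h2))
              | exact congrArg Sum.inr (Fin.ext (Sum.inr_injective (Sum.inr_injective h2)))
              | simp at h2)
    simp only [Fintype.card_sum, Fintype.card_fin] at hcard
    omega

end C1

section C2
open CW

lemma ids_card_lower {m n : ℕ} {s : Fin m → ℕ} {t : Fin n → ℕ} {B : Fin m → Fin n → Prop}
    (hs : ∀ i, 1 ≤ s i) (j0 : Fin n) (ht : 1 ≤ t j0)
    (A : Finset (CWVert m n s t))
    (hdom : ∀ v, v ∈ A ∨ ∃ a ∈ A, (cwGraph m n s t B).Adj a v) :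
    m + 1 ≤ A.card := by
  classical
  have hfib : ∀ i : Fin m, 0 < (A.filter (fun a => group a = Sum.inl i)).card := by
    intro i
    rcases forced_v (B := B) hdom i ⟨0, hs i⟩ with h | h
    · exact card_pos.mpr ⟨_, mem_filter.mpr ⟨h, rfl⟩⟩
    · exact card_pos.mpr ⟨_, mem_filter.mpr ⟨h, rfl⟩⟩
  have hwfib : ∃ j, 0 < (A.filter (fun a => group a = Sum.inr j)).card := by
    by_cases hw : ∃ j, (wv j : CWVert m n s t) ∈ A
    · obtain ⟨j, hj⟩ := hw
      exact ⟨j, card_pos.mpr ⟨_, mem_filter.mpr ⟨hj, rfl⟩⟩⟩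
    · push_neg at hw
      rcases forced_y (B := B) hdom (hw j0) ⟨0, ht⟩ with h | h
      · exact ⟨j0, card_pos.mpr ⟨_, mem_filter.mpr ⟨h, rfl⟩⟩⟩
      · exact ⟨j0, card_pos.mpr ⟨_, mem_filter.mpr ⟨h, rfl⟩⟩⟩
  rw [Finset.card_eq_sum_card_fiberwise (f := group) (t := univ) (fun x _ => mem_univ _),
    Fintype.sum_sum_type]
  obtain ⟨j1, hj1⟩ := hwfib
  have h1 : m ≤ ∑ i : Fin m, (A.filter (fun a => group a = Sum.inl i)).card := by
    calc m = ∑ _i : Fin m, 1 := by simp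
    _ ≤ _ := Finset.sum_le_sum (fun i _ => hfib i)
  have h2 : 1 ≤ ∑ j : Fin n, (A.filter (fun a => group a = Sum.inr j)).card :=
    le_trans hj1 (Finset.single_le_sum (f := fun j => (A.filter (fun a => group a = Sum.inr j)).card)
      (fun _ _ => Nat.zero_le _) (mem_univ j1))
  omega

def s2 (d r e : ℕ) : Fin (e-1) → ℕ := fun i => if (i : ℕ) = 1 then d - r else 1

def t2 (r e : ℕ) : Fin 2 → ℕ := fun j => if j = 0 then r - e + 1 else 0

def B2 (e : ℕ) : Fin (e-1) → Fin 2 → Prop := fun i j => j = 1 ∨ (i : ℕ) = 0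

lemma hs2 {d r e : ℕ} (hrd : r < d) : ∀ i, 1 ≤ s2 d r e i := by
  intro i
  rw [s2]
  split_ifs <;> omega

open Classical in
noncomputable def A2 (d r e : ℕ) (he : 3 ≤ e) (hrd : r < d) :
    Finset (CWVert (e-1) 2 (s2 d r e) (t2 r e)) :=
  {wv 0, xv ⟨0, by omega⟩ ⟨0, hs2 hrd _⟩}
  ∪ ((univ.filter (fun i : Fin (e-1) => (i : ℕ) ≠ 0)).image (fun i => vv i))

lemma mem_A2 {d r e : ℕ} {he : 3 ≤ e} {hrd : r < d} {a : CWVert (e-1) 2 (s2 d r e) (t2 r e)} :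
    a ∈ A2 d r e he hrd ↔ a = wv 0 ∨ a = xv ⟨0, by omega⟩ ⟨0, hs2 hrd _⟩ ∨
      ∃ i : Fin (e-1), (i : ℕ) ≠ 0 ∧ a = vv i := by
  classical
  simp only [A2, mem_union, mem_insert, mem_singleton, mem_image, mem_filter, mem_univ, true_and]
  constructor
  · rintro ((rfl | rfl) | ⟨i, hi, rfl⟩)
    · exact Or.inl rfl
    · exact Or.inr (Or.inl rfl)
    · exact Or.inr (Or.inr ⟨i, hi, rfl⟩)
  · rintro (rfl | rfl | ⟨i, hi, rfl⟩)
    · exact Or.inl (Or.inl rfl)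
    · exact Or.inl (Or.inr rfl)
    · exact Or.inr ⟨i, hi, rfl⟩

lemma A2_card {d r e : ℕ} (he : 3 ≤ e) (hrd : r < d) : (A2 d r e he hrd).card = e := by
  classical
  rw [A2, card_union_of_disjoint (by
    rw [Finset.disjoint_left]
    rintro a ha hb
    simp only [mem_insert, mem_singleton] at ha
    simp only [mem_image, mem_filter, mem_univ, true_and] at hb
    obtain ⟨i, hi, h⟩ := hb
    rcases ha with rfl | rfl <;> simp at h)]
  have h1 : ({wv 0, xv ⟨0, by omega⟩ ⟨0, hs2 hrd _⟩} :
      Finset (CWVert (e-1) 2 (s2 d r e) (t2 r e))).card = 2 := by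
    rw [card_insert_of_notMem (by simp), card_singleton]
  have h2 : ((univ.filter (fun i : Fin (e-1) => (i : ℕ) ≠ 0)).image
      (fun i => (vv i : CWVert (e-1) 2 (s2 d r e) (t2 r e)))).card = e - 2 := by
    rw [Finset.card_image_of_injective _ (fun p q h => by simpa using h)]
    have : (univ.filter (fun i : Fin (e-1) => (i : ℕ) ≠ 0))
        = univ.erase (⟨0, by omega⟩ : Fin (e-1)) := by
      ext i
      simp [Fin.ext_iff]
    rw [this, Finset.card_erase_of_mem (mem_univ _)]
    simp
    omega
  rw [h1, h2]
  omega

lemma ids2 (d r e : ℕ) (he : 3 ≤ e) (her : e ≤ r) (hrd : r < d) :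
    indepDomNumber (cwGraph (e-1) 2 (s2 d r e) (t2 r e) (B2 e)) = e := by
  classical
  set G := cwGraph (e-1) 2 (s2 d r e) (t2 r e) (B2 e) with hG
  have hindep : ∀ a ∈ A2 d r e he hrd, ∀ b ∈ A2 d r e he hrd, ¬ G.Adj a b := by
    intro a ha b hb hadj
    rw [mem_A2] at ha hb
    rw [hG, cwGraph, SimpleGraph.fromRel_adj] at hadj
    obtain ⟨hne, hrel⟩ := hadj
    rcases ha with rfl | rfl | ⟨i, hi, rfl⟩ <;> rcases hb with rfl | rfl | ⟨i', hi', rfl⟩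
    · exact hne rfl
    · rcases hrel with h | h <;> simp [cwRel] at h
    · rcases hrel with h | h
      · simp [cwRel] at h
      · simp [cwRel, B2, Fin.ext_iff] at h
        exact hi' h
    · rcases hrel with h | h <;> simp [cwRel] at h
    · exact hne rfl
    · rcases hrel with h | h
      · simp [cwRel] at h
      · simp [cwRel, Fin.ext_iff] at h
        exact hi' h
    · rcases hrel with h | h
      · simp [cwRel, B2, Fin.ext_iff] at h
        exact hi h
      · simp [cwRel] at h
    · rcases hrel with h | h
      · simp [cwRel, Fin.ext_iff] at h
        exact hi h
      · simp [cwRel] at h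
    · rcases hrel with h | h <;> simp [cwRel] at h
  have hdom : ∀ v, v ∈ A2 d r e he hrd ∨ ∃ a ∈ A2 d r e he hrd, G.Adj a v := by
    intro v
    rcases v with i | j | ⟨i, k⟩ | ⟨j, l, c⟩
    · by_cases hi : (i : ℕ) = 0
      · refine Or.inr ⟨wv 0, mem_A2.mpr (Or.inl rfl), ?_⟩
        rw [hG, cwGraph, SimpleGraph.fromRel_adj]
        exact ⟨by simp, Or.inr (Or.inr hi)⟩
      · exact Or.inl (mem_A2.mpr (Or.inr (Or.inr ⟨i, hi, rfl⟩)))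
    · by_cases hj : j = 0
      · exact Or.inl (mem_A2.mpr (Or.inl (by rw [hj])))
      · have hj1 : j = 1 := by
          rcases j with ⟨jv, hjv⟩
          rw [Fin.ext_iff] at hj ⊢
          simp only [Fin.val_zero, Fin.val_one] at hj ⊢
          omega
        refine Or.inr ⟨vv ⟨1, by omega⟩,
          mem_A2.mpr (Or.inr (Or.inr ⟨⟨1, by omega⟩, by simp, rfl⟩)), ?_⟩
        rw [hG, cwGraph, SimpleGraph.fromRel_adj]
        exact ⟨by simp, Or.inl (Or.inl hj1)⟩
    · obtain ⟨iv, hlt⟩ := i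
      by_cases hi : iv = 0
      · subst hi
        have hk : (k : ℕ) = 0 := by
          have hklt := k.isLt
          have hs0 : s2 d r e ⟨0, hlt⟩ = 1 := by simp [s2]
          have : (k : ℕ) < 1 := lt_of_lt_of_le hklt (le_of_eq hs0)
          omega
        have hk2 : k = ⟨0, hs2 hrd _⟩ := Fin.ext hk
        exact Or.inl (mem_A2.mpr (Or.inr (Or.inl (by rw [hk2]))))
      · refine Or.inr ⟨vv ⟨iv, hlt⟩, mem_A2.mpr (Or.inr (Or.inr ⟨⟨iv, hlt⟩, hi, rfl⟩)), ?_⟩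
        rw [hG, cwGraph, SimpleGraph.fromRel_adj]
        exact ⟨by simp, Or.inl rfl⟩
    · have hj : j = 0 := by
        rcases j with ⟨jv, hjv⟩
        rw [Fin.ext_iff]
        simp only [Fin.val_zero]
        by_contra hjv0
        have hj1 : jv = 1 := by omega
        subst hj1
        have hl := l.isLt
        have ht0 : t2 r e ⟨1, hjv⟩ = 0 := by
          simp [t2, Fin.ext_iff]
        have hl2 : (l : ℕ) < 0 := lt_of_lt_of_le hl (le_of_eq ht0)
        omega
      subst hj
      refine Or.inr ⟨wv 0, mem_A2.mpr (Or.inl rfl), ?_⟩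
      rw [hG, cwGraph, SimpleGraph.fromRel_adj]
      exact ⟨by simp, Or.inl rfl⟩
  have hmem : e ∈ {k | ∃ A : Finset (CWVert (e-1) 2 (s2 d r e) (t2 r e)),
      ((∀ a ∈ A, ∀ b ∈ A, ¬ G.Adj a b) ∧ (∀ v, v ∈ A ∨ ∃ a ∈ A, G.Adj a v)) ∧ A.card = k} :=
    ⟨A2 d r e he hrd, ⟨hindep, hdom⟩, A2_card he hrd⟩
  refine le_antisymm (Nat.sInf_le hmem) (le_csInf ⟨_, hmem⟩ ?_)
  rintro k ⟨A, ⟨hind, hdomA⟩, rfl⟩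
  have := ids_card_lower (hs2 hrd) 0 (by simp [t2]) A hdomA
  omega

end C2

section Final
open CW

lemma bip_conn1 (m : ℕ) (hm : 0 < m) : (bipGraph m 1 (fun _ _ => True)).Connected := by
  rw [SimpleGraph.connected_iff]
  refine ⟨?_, ⟨Sum.inr 0⟩⟩
  have hub : ∀ x : Fin m ⊕ Fin 1, (bipGraph m 1 (fun _ _ => True)).Reachable x (Sum.inr 0) := by
    intro x
    rcases x with i | j
    · refine SimpleGraph.Adj.reachable ?_
      rw [bipGraph, SimpleGraph.fromRel_adj]
      exact ⟨by simp, Or.inl trivial⟩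
    · rw [Subsingleton.elim j 0]
  intro a b
  exact (hub a).trans (hub b).symm

lemma bip_conn2 (e : ℕ) (he : 3 ≤ e) : (bipGraph (e-1) 2 (B2 e)).Connected := by
  rw [SimpleGraph.connected_iff]
  refine ⟨?_, ⟨Sum.inr 1⟩⟩
  have hub : ∀ x : Fin (e-1) ⊕ Fin 2, (bipGraph (e-1) 2 (B2 e)).Reachable x (Sum.inr 1) := by
    intro x
    rcases x with i | j
    · refine SimpleGraph.Adj.reachable ?_
      rw [bipGraph, SimpleGraph.fromRel_adj]
      exact ⟨by simp, Or.inl (Or.inl rfl)⟩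
    · rcases j with ⟨jv, hjv⟩
      interval_cases jv
      · refine SimpleGraph.Reachable.trans (SimpleGraph.Adj.reachable (v := Sum.inl ⟨0, by omega⟩) ?_)
          (SimpleGraph.Adj.reachable ?_)
        · rw [bipGraph, SimpleGraph.fromRel_adj]
          exact ⟨by simp, Or.inr (Or.inr rfl)⟩
        · rw [bipGraph, SimpleGraph.fromRel_adj]
          exact ⟨by simp, Or.inl (Or.inl rfl)⟩
      · exact SimpleGraph.Reachable.refl _
  intro a b
  exact (hub a).trans (hub b).symm

theorem exists_cwGraph_dim_reg_depth' (d r e : ℕ) (hdr : r ≤ d) (hre : e ≤ r)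
    (he : 3 ≤ e) :
    ∃ (m n : ℕ) (s : Fin m → ℕ) (t : Fin n → ℕ) (B : Fin m → Fin n → Prop),
      1 ≤ m ∧ 1 ≤ n ∧ (∀ i, 1 ≤ s i) ∧ (bipGraph m n B).Connected ∧
      (2 ≤ m ∨ ∃ j, 0 < t j) ∧
      indepNumber (cwGraph m n s t B) = d ∧
      matchingNumber (cwGraph m n s t B) = r ∧
      indepDomNumber (cwGraph m n s t B) = e := by
  by_cases hd : d = r
  · subst hd
    refine ⟨e-1, 1, fun _ => 1, fun _ => d-e+1, fun _ _ => True,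
      by omega, le_refl 1, fun _ => le_refl 1, bip_conn1 _ (by omega), Or.inl (by omega), ?_, ?_, ?_⟩
    · rw [indepNumber_cw (fun _ => le_refl 1)]
      simp only [Finset.sum_const, card_univ, Fintype.card_fin, smul_eq_mul, mul_one,
        Fin.sum_univ_one]
      omega
    · rw [matchingNumber_cw (by omega) (fun _ => le_refl 1)]
      simp only [Finset.sum_const, card_univ, Fintype.card_fin, smul_eq_mul, mul_one,
        Fin.sum_univ_one]
      omega
    · exact ids1 d e he hre
  · have hrd : r < d := by omega
    refine ⟨e-1, 2, s2 d r e, t2 r e, B2 e,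
      by omega, by omega, hs2 hrd, bip_conn2 e he, Or.inl (by omega), ?_, ?_, ?_⟩
    · rw [indepNumber_cw (hs2 hrd)]
      have h1 : ∑ i, s2 d r e i = (d - r - 1) + (e - 1) := by
        simp only [s2]
        rw [Fin.sum_univ_eq_sum_range (fun k => if k = 1 then d - r else 1)]
        rw [Finset.sum_congr rfl (fun k _ => by
          exact (by split_ifs <;> omega :
            (if k = 1 then d - r else 1) = (if k = 1 then d - r - 1 else 0) + 1))]
        rw [Finset.sum_add_distrib, Finset.sum_ite_eq' (Finset.range (e-1)) 1
          (fun _ => d - r - 1)]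
        rw [if_pos (Finset.mem_range.mpr (by omega))]
        simp
      have h2 : ∑ j : Fin 2, max (t2 r e j) 1 = (r - e + 1) + 1 := by
        rw [Fin.sum_univ_two]
        simp [t2]
      rw [h1, h2]
      omega
    · rw [matchingNumber_cw (by omega) (hs2 hrd)]
      have h2 : ∑ j : Fin 2, t2 r e j = r - e + 1 := by
        rw [Fin.sum_univ_two]
        simp [t2]
      rw [h2]
      omega
    · exact ids2 d r e he hre hrd

end Final

/-- For integers `d ≥ r ≥ e ≥ 3` there exists a Cameron–Walker graph `G` whose maximum
independent set has size `d` (so `dim S/I(G) = deg h(S/I(G),λ) = d`), whose matching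
number equals `r` (so `reg S/I(G) = r`), and whose minimum independent dominating set
has size `e` (so `depth S/I(G) = e`). -/
theorem exists_cwGraph_dim_reg_depth (d r e : ℕ) (hdr : r ≤ d) (hre : e ≤ r)
    (he : 3 ≤ e) :
    ∃ (m n : ℕ) (s : Fin m → ℕ) (t : Fin n → ℕ) (B : Fin m → Fin n → Prop),
      1 ≤ m ∧ 1 ≤ n ∧ (∀ i, 1 ≤ s i) ∧ (bipGraph m n B).Connected ∧
      (2 ≤ m ∨ ∃ j, 0 < t j) ∧
      indepNumber (cwGraph m n s t B) = d ∧
      matchingNumber (cwGraph m n s t B) = r ∧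
      indepDomNumber (cwGraph m n s t B) = e := by
  exact exists_cwGraph_dim_reg_depth' d r e hdr hre he
end
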